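/- arXiv:math/9503226 — 6 statements merged into one kernel-verified Lean document; each statement's English description precedes it below -/
import Mathlib

section
/- Let Ξ ⊆ Ξ' be sets of variables and Γ a set of abelian-group equations. If there is an increasing continuous sequence ⟨Ξ_ζ : ζ ≤ ζ*⟩ with Ξ_0 = Ξ, Ξ_{ζ*} = Ξ', such that for each ζ < ζ* the group G(Ξ_{ζ+1}, Γ) is a free extension of G(Ξ_ζ, Γ), then G(Ξ', Γ) is a free extension of G(Ξ, Γ): the canonical homomorphism G(Ξ,Γ) → G(Ξ',Γ) induced by the identity on Ξ is injective and its cokernel is a free abelian group. -/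
universe u

namespace Sh521

variable {V : Type u}

/-- The relations of `Γ` mentioning only variables from `Ξ`, viewed inside the free
abelian group `Ξ →₀ ℤ` on `Ξ`. -/
noncomputable def relSub (Γ : Set (V →₀ ℤ)) (Ξ : Set V) : AddSubgroup (↥Ξ →₀ ℤ) :=
  AddSubgroup.closure
    ((fun g => Finsupp.subtypeDomain (· ∈ Ξ) g) '' {g ∈ Γ | (g.support : Set V) ⊆ Ξ})

/-- `G(Ξ,Γ)`: the abelian group freely generated by `Ξ` except for the equations of `Γ`
mentioning only variables from `Ξ`. -/
abbrev GG (Γ : Set (V →₀ ℤ)) (Ξ : Set V) : Type u := (↥Ξ →₀ ℤ) ⧸ relSub Γ Ξ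

/-- The generator of `G(Ξ,Γ)` corresponding to a variable `v ∈ Ξ`. -/
noncomputable def gen (Γ : Set (V →₀ ℤ)) (Ξ : Set V) (v : V) (hv : v ∈ Ξ) : GG Γ Ξ :=
  QuotientAddGroup.mk (Finsupp.single ⟨v, hv⟩ (1 : ℤ))

/-- `G(Ξ',Γ)` is a free extension of `G(Ξ,Γ)`: the canonical homomorphism induced by the
identity on `Ξ` (i.e. sending generators to generators) is injective and its cokernel is
a free abelian group. -/
def FreeExtension (Γ : Set (V →₀ ℤ)) (Ξ Ξ' : Set V) : Prop :=
  Ξ ⊆ Ξ' ∧ ∃ φ : GG Γ Ξ →+ GG Γ Ξ',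
    (∀ (v : V) (hv : v ∈ Ξ) (hv' : v ∈ Ξ'), φ (gen Γ Ξ v hv) = gen Γ Ξ' v hv') ∧
    Function.Injective φ ∧ Module.Free ℤ (GG Γ Ξ' ⧸ φ.range)

/-! Part 1 : the canonical maps -/

noncomputable def inclF {Ξ Ξ' : Set V} (h : Ξ ⊆ Ξ') : (↥Ξ →₀ ℤ) →+ (↥Ξ' →₀ ℤ) :=
  Finsupp.mapDomain.addMonoidHom (Set.inclusion h)

lemma inclF_injective {Ξ Ξ' : Set V} (h : Ξ ⊆ Ξ') : Function.Injective (inclF h) :=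
  Finsupp.mapDomain_injective (Set.inclusion_injective h)

lemma inclF_single {Ξ Ξ' : Set V} (h : Ξ ⊆ Ξ') (v : V) (hv : v ∈ Ξ) (n : ℤ) :
    inclF h (Finsupp.single ⟨v, hv⟩ n) = Finsupp.single ⟨v, h hv⟩ n := by
  simp [inclF, Finsupp.mapDomain_single, Set.inclusion]

lemma inclF_comp {Ξ Ξ' Ξ'' : Set V} (h : Ξ ⊆ Ξ') (h' : Ξ' ⊆ Ξ'') (f : ↥Ξ →₀ ℤ) :
    inclF h' (inclF h f) = inclF (h.trans h') f := by
  simp only [inclF, Finsupp.mapDomain.addMonoidHom_apply]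
  rw [← Finsupp.mapDomain_comp]
  rfl

lemma inclF_subtypeDomain {Ξ Ξ' : Set V} (h : Ξ ⊆ Ξ') (g : V →₀ ℤ)
    (hg : (g.support : Set V) ⊆ Ξ) :
    inclF h (Finsupp.subtypeDomain (· ∈ Ξ) g) = Finsupp.subtypeDomain (· ∈ Ξ') g := by
  ext ⟨v, hv'⟩
  by_cases hv : v ∈ Ξ
  · have : (⟨v, hv'⟩ : ↥Ξ') = Set.inclusion h ⟨v, hv⟩ := rfl
    rw [this]
    show Finsupp.mapDomain _ _ _ = _
    rw [Finsupp.mapDomain_apply (Set.inclusion_injective h)]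
    rfl
  · have h1 : (⟨v, hv'⟩ : ↥Ξ') ∉ Set.range (Set.inclusion h) := by
      rintro ⟨⟨w, hw⟩, hwv⟩
      apply hv
      have : w = v := congrArg Subtype.val hwv
      exact this ▸ hw
    have h2 : g v = 0 := by
      by_contra hne
      exact hv (hg (Finsupp.mem_support_iff.mpr hne))
    simp [inclF, Finsupp.mapDomain_notin_range _ _ h1, h2]

lemma relSub_map_le {Γ : Set (V →₀ ℤ)} {Ξ Ξ' : Set V} (h : Ξ ⊆ Ξ') :
    (relSub Γ Ξ).map (inclF h) ≤ relSub Γ Ξ' := by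
  rw [relSub, AddMonoidHom.map_closure]
  apply AddSubgroup.closure_mono
  rintro x ⟨y, ⟨g, ⟨hgΓ, hgs⟩, rfl⟩, rfl⟩
  exact ⟨g, ⟨hgΓ, hgs.trans h⟩, (inclF_subtypeDomain h g hgs).symm⟩

noncomputable def canon (Γ : Set (V →₀ ℤ)) {Ξ Ξ' : Set V} (h : Ξ ⊆ Ξ') :
    GG Γ Ξ →+ GG Γ Ξ' :=
  QuotientAddGroup.map _ _ (inclF h)
    (fun x hx => by
      show inclF h x ∈ relSub Γ Ξ'
      exact relSub_map_le h (AddSubgroup.mem_map_of_mem _ hx))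

lemma canon_mk (Γ : Set (V →₀ ℤ)) {Ξ Ξ' : Set V} (h : Ξ ⊆ Ξ') (f : ↥Ξ →₀ ℤ) :
    canon Γ h (QuotientAddGroup.mk f) = QuotientAddGroup.mk (inclF h f) := rfl

lemma canon_gen (Γ : Set (V →₀ ℤ)) {Ξ Ξ' : Set V} (h : Ξ ⊆ Ξ') (v : V) (hv : v ∈ Ξ) :
    canon Γ h (gen Γ Ξ v hv) = gen Γ Ξ' v (h hv) := by
  rw [gen, canon_mk, inclF_single]; rfl

lemma hom_ext {Γ : Set (V →₀ ℤ)} {Ξ : Set V} {A : Type*} [AddGroup A]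
    {f g : GG Γ Ξ →+ A} (hfg : ∀ (v : V) (hv : v ∈ Ξ),
      f (gen Γ Ξ v hv) = g (gen Γ Ξ v hv)) : f = g := by
  apply QuotientAddGroup.addMonoidHom_ext
  apply Finsupp.addHom_ext
  rintro ⟨v, hv⟩ n
  have h1 : Finsupp.single (⟨v, hv⟩ : ↥Ξ) n = n • Finsupp.single ⟨v, hv⟩ (1 : ℤ) := by
    rw [Finsupp.smul_single, smul_eq_mul, mul_one]
  simp only [AddMonoidHom.comp_apply, QuotientAddGroup.mk'_apply, h1]
  rw [show ((n • Finsupp.single (⟨v, hv⟩ : ↥Ξ) (1 : ℤ) : ↥Ξ →₀ ℤ) : GG Γ Ξ)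
      = n • gen Γ Ξ v hv from map_zsmul (QuotientAddGroup.mk' (relSub Γ Ξ)) _ _,
    map_zsmul, map_zsmul, hfg v hv]


lemma canon_comp (Γ : Set (V →₀ ℤ)) {Ξ Ξ' Ξ'' : Set V} (h : Ξ ⊆ Ξ') (h' : Ξ' ⊆ Ξ'') :
    (canon Γ h').comp (canon Γ h) = canon Γ (h.trans h') :=
  hom_ext fun v hv => by
    simp only [AddMonoidHom.comp_apply, canon_gen]

lemma canon_comp_apply (Γ : Set (V →₀ ℤ)) {Ξ Ξ' Ξ'' : Set V} (h : Ξ ⊆ Ξ') (h' : Ξ' ⊆ Ξ'')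
    (x : GG Γ Ξ) : canon Γ h' (canon Γ h x) = canon Γ (h.trans h') x := by
  rw [← canon_comp Γ h h']; rfl

lemma canon_id (Γ : Set (V →₀ ℤ)) {Ξ : Set V} (h : Ξ ⊆ Ξ) :
    canon Γ h = AddMonoidHom.id (GG Γ Ξ) :=
  hom_ext fun v hv => by rw [canon_gen]; rfl

lemma eq_canon (Γ : Set (V →₀ ℤ)) {Ξ Ξ' : Set V} (h : Ξ ⊆ Ξ') (φ : GG Γ Ξ →+ GG Γ Ξ')
    (hφ : ∀ (v : V) (hv : v ∈ Ξ) (hv' : v ∈ Ξ'), φ (gen Γ Ξ v hv) = gen Γ Ξ' v hv') :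
    φ = canon Γ h :=
  hom_ext fun v hv => by rw [hφ v hv (h hv), canon_gen]

universe v w x
open Submodule in
/-- If an abelian group `M` has an ordinal-indexed filtration by submodules, starting at the
kernel of a surjection `π : M → N`, ending at `⊤`, continuous at limits, and equipped with
"relative basis" data at each step, then `N` is free. -/
theorem free_of_filtration {M : Type v} {N : Type w} [AddCommGroup M] [AddCommGroup N]
    (π : M →+ N) (hsurj : Function.Surjective π)
    (lam : Ordinal) (F : Ordinal → Submodule ℤ M)
    (hker : ∀ x, π x = 0 ↔ x ∈ F 0)
    (hmono : ∀ ζ ζ' : Ordinal, ζ ≤ ζ' → ζ' ≤ lam → F ζ ≤ F ζ')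
    (htop : F lam = ⊤)
    (hcont : ∀ δ, δ ≤ lam → Order.IsSuccLimit δ → F δ ≤ ⨆ ζ : {ζ : Ordinal // ζ < δ}, F ζ.1)
    {I : Type x} (q : I → M) (st : I → Ordinal)
    (hst : ∀ i, st i < lam)
    (hmem : ∀ i, q i ∈ F (st i + 1))
    (hgen : ∀ ζ, ζ < lam → F (ζ + 1) ≤ F ζ ⊔ Submodule.span ℤ (q '' {i | st i = ζ}))
    (hind : ∀ (c : I →₀ ℤ) (ζ : Ordinal), (∀ i ∈ c.support, st i = ζ) →
      (c.sum fun i n => n • q i) ∈ F ζ → c = 0) :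
    Module.Free ℤ N := by
  classical
  set ν : I → N := fun i => π (q i) with hν
  -- sums are mapped to sums
  have hπsum : ∀ c : I →₀ ℤ, π (c.sum fun i n => n • q i) = c.sum fun i n => n • ν i := by
    intro c
    rw [map_finsuppSum]
    exact Finsupp.sum_congr fun i _ => map_zsmul π _ _
  -- Part A : spanning
  have claim1 : ∀ ζ, ζ ≤ lam → F ζ ≤ F 0 ⊔ Submodule.span ℤ (Set.range q) := by
    intro ζ
    induction ζ using Ordinal.induction with
    | h ζ IH =>
      intro hζlam
      rcases Ordinal.zero_or_succ_or_isSuccLimit ζ with h0 | ⟨ξ, hξ⟩ | hlim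
      · subst h0; exact le_sup_left
      · rw [← hξ, ← Ordinal.add_one_eq_succ] at hζlam ⊢
        have hξlam : ξ < lam := lt_of_lt_of_le (by exact lt_of_lt_of_le (Order.lt_succ ξ) (by rw [Ordinal.add_one_eq_succ])) hζlam
        refine (hgen ξ hξlam).trans (sup_le ?_ ?_)
        · exact IH ξ (by rw [← hξ]; exact Order.lt_succ ξ) (le_of_lt hξlam)
        · exact le_sup_of_le_right (Submodule.span_mono (Set.image_subset_range _ _))
      · refine (hcont ζ hζlam hlim).trans (iSup_le ?_)
        rintro ⟨ξ, hξ⟩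
        exact IH ξ hξ (le_of_lt (lt_of_lt_of_le hξ hζlam))
  have hspan : ⊤ ≤ Submodule.span ℤ (Set.range ν) := by
    rintro x -
    obtain ⟨m, rfl⟩ := hsurj x
    have hm : m ∈ F 0 ⊔ Submodule.span ℤ (Set.range q) :=
      claim1 lam le_rfl (htop ▸ Submodule.mem_top)
    obtain ⟨a, ha, b, hb, rfl⟩ := Submodule.mem_sup.mp hm
    have ha0 : π a = 0 := (hker a).mpr ha
    have hb' : π.toIntLinearMap b ∈ Submodule.map π.toIntLinearMap
        (Submodule.span ℤ (Set.range q)) := Submodule.mem_map_of_mem hb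
    rw [Submodule.map_span, ← Set.range_comp] at hb'
    rw [map_add, ha0, zero_add]
    exact hb'
  -- Part B : linear independence
  have claim2 : ∀ ζ, ∀ l : I →₀ ℤ, (∀ i ∈ l.support, st i < ζ) →
      (l.sum fun i n => n • q i) ∈ F 0 → l = 0 := by
    intro ζ
    induction ζ using Ordinal.induction with
    | h ζ IH =>
      intro l hl hsum
      by_cases h0 : l = 0
      · exact h0
      have hne : (l.support.image st).Nonempty :=
        (Finset.image_nonempty).mpr (Finsupp.support_nonempty_iff.mpr h0)
      set μ := (l.support.image st).max' hne with hμ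
      obtain ⟨i₀, hi₀, hsti₀⟩ := Finset.mem_image.mp ((l.support.image st).max'_mem hne)
      have hμζ : μ < ζ := by rw [hμ, ← hsti₀]; exact hl i₀ hi₀
      have hμlam : μ ≤ lam := by rw [hμ, ← hsti₀]; exact le_of_lt (hst i₀)
      set l₁ := l.filter (fun i => st i = μ) with hl₁
      set l₂ := l.filter (fun i => ¬ st i = μ) with hl₂
      have hsplit : l₁ + l₂ = l := Finsupp.filter_pos_add_filter_neg l _
      have hsum_split : (l.sum fun i n => n • q i)
          = (l₁.sum fun i n => n • q i) + (l₂.sum fun i n => n • q i) := by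
        conv_lhs => rw [← hsplit]
        exact Finsupp.sum_add_index' (fun i => zero_smul ℤ (q i)) (fun i m n => add_smul m n (q i))
      have hsupp1 : ∀ i ∈ l₁.support, st i = μ := by
        intro i hi
        rw [hl₁, Finsupp.support_filter, Finset.mem_filter] at hi
        exact hi.2
      have hsupp2 : ∀ i ∈ l₂.support, st i < μ := by
        intro i hi
        rw [hl₂, Finsupp.support_filter, Finset.mem_filter] at hi
        refine lt_of_le_of_ne ?_ hi.2
        exact Finset.le_max' _ _ (Finset.mem_image_of_mem st hi.1)
      have hsum2 : (l₂.sum fun i n => n • q i) ∈ F μ := by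
        apply Submodule.sum_mem
        intro i hi
        apply Submodule.smul_mem
        have : st i + 1 ≤ μ := by
          rw [Ordinal.add_one_eq_succ, Order.succ_le_iff]
          exact hsupp2 i hi
        exact hmono _ _ this hμlam (hmem i)
      have hsumF : (l.sum fun i n => n • q i) ∈ F μ :=
        hmono 0 μ zero_le hμlam hsum
      have hsum1 : (l₁.sum fun i n => n • q i) ∈ F μ := by
        have := Submodule.sub_mem _ hsumF hsum2
        rwa [hsum_split, add_sub_cancel_right] at this
      have hl₁0 : l₁ = 0 := hind l₁ μ hsupp1 hsum1
      have hl₂0 : l₂ = 0 := by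
        apply IH μ hμζ l₂ hsupp2
        have : (l₂.sum fun i n => n • q i) = l.sum fun i n => n • q i := by
          rw [hsum_split, hl₁0, Finsupp.sum_zero_index, zero_add]
        rwa [this]
      rw [← hsplit, hl₁0, hl₂0, add_zero]
  have hli : LinearIndependent ℤ ν := by
    rw [linearIndependent_iff]
    intro l hl
    rw [Finsupp.linearCombination_apply] at hl
    apply claim2 lam l (fun i _ => hst i)
    rw [← hker]
    rw [hπsum]
    exact hl
  exact Module.Free.of_basis (Module.Basis.mk hli hspan)

lemma exists_stage (ζstar : Ordinal) (Ξseq : Ordinal → Set V)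
    (hmono : ∀ ζ ζ' : Ordinal, ζ ≤ ζ' → ζ' ≤ ζstar → Ξseq ζ ⊆ Ξseq ζ')
    (δ : Ordinal) (hδ : δ ≤ ζstar) (hlim : Order.IsSuccLimit δ)
    (hcov : Ξseq δ = ⋃ ζ ∈ Set.Iio δ, Ξseq ζ)
    (s : Finset V) (hs : ↑s ⊆ Ξseq δ) : ∃ ξ < δ, ↑s ⊆ Ξseq ξ := by
  classical
  have hex : ∀ v ∈ s, ∃ ζ, ζ < δ ∧ v ∈ Ξseq ζ := by
    intro v hv
    have h1 := hs hv
    rw [hcov] at h1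
    simpa using h1
  set g : V → Ordinal := fun v => if h : ∃ ζ, ζ < δ ∧ v ∈ Ξseq ζ then h.choose else 0 with hg
  have hsup : s.sup g < δ := by
    rw [Finset.sup_lt_iff (by rw [Ordinal.bot_eq_zero]; exact hlim.pos)]
    intro v hv
    rw [hg]; simp only; rw [dif_pos (hex v hv)]
    exact (hex v hv).choose_spec.1
  refine ⟨s.sup g, hsup, ?_⟩
  intro v hv
  have h1 := hex v hv
  have h2 : v ∈ Ξseq (g v) := by rw [hg]; simp only; rw [dif_pos h1]; exact h1.choose_spec.2
  exact hmono (g v) (s.sup g) (Finset.le_sup hv) (le_trans hsup.le hδ) h2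


end Sh521

namespace Sh521

/-- Observation 0.2(1). If there is an increasing continuous sequence
`⟨Ξ_ζ : ζ ≤ ζ*⟩` with `Ξ_0 = Ξ`, `Ξ_{ζ*} = Ξ'`, such that each `G(Ξ_{ζ+1},Γ)` is a free
extension of `G(Ξ_ζ,Γ)`, then `G(Ξ',Γ)` is a free extension of `G(Ξ,Γ)`. -/
theorem freeExtension_of_filtration {V : Type u} (Γ : Set (V →₀ ℤ)) (Ξ Ξ' : Set V)
    (hsub : Ξ ⊆ Ξ') (ζstar : Ordinal) (Ξseq : Ordinal → Set V)
    (h0 : Ξseq 0 = Ξ) (hend : Ξseq ζstar = Ξ')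
    (hmono : ∀ ζ ζ' : Ordinal, ζ ≤ ζ' → ζ' ≤ ζstar → Ξseq ζ ⊆ Ξseq ζ')
    (hcont : ∀ δ ≤ ζstar, Order.IsSuccLimit δ → Ξseq δ = ⋃ ζ ∈ Set.Iio δ, Ξseq ζ)
    (hstep : ∀ ζ < ζstar, FreeExtension Γ (Ξseq ζ) (Ξseq (ζ + 1))) :
    FreeExtension Γ Ξ Ξ' := by
  classical
  subst h0
  subst hend
  have hle1 : ∀ ζ : Ordinal, ζ ≤ ζ + 1 := fun ζ => by
    rw [Ordinal.add_one_eq_succ]; exact Order.le_succ ζ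
  have hlt1 : ∀ ζ : Ordinal, ζ < ζ + 1 := fun ζ => by
    rw [Ordinal.add_one_eq_succ]; exact Order.lt_succ ζ
  have hsucc : ∀ ζ : Ordinal, ζ < ζstar → ζ + 1 ≤ ζstar := fun ζ h => by
    rw [Ordinal.add_one_eq_succ, Order.succ_le_iff]; exact h
  -- Injectivity of all the canonical maps along the filtration
  have key_inj : ∀ ζ', ζ' ≤ ζstar → ∀ ζ, ζ ≤ ζ' → ∀ (h : Ξseq ζ ⊆ Ξseq ζ'),
      Function.Injective (canon Γ h) := by
    intro ζ'
    induction ζ' using Ordinal.induction with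
    | h ζ' IH =>
      intro hζ' ζ hζζ' h
      rcases eq_or_lt_of_le hζζ' with rfl | hlt
      · rw [canon_id]
        exact fun a b hab => hab
      rcases Ordinal.zero_or_succ_or_isSuccLimit ζ' with rfl | ⟨ξ, hξ⟩ | hlim
      · exact absurd hlt not_lt_zero
      · -- successor case
        rw [← Ordinal.add_one_eq_succ] at hξ
        subst hξ
        have hζξ : ζ ≤ ξ := by
          rw [Ordinal.add_one_eq_succ] at hlt
          exact Order.lt_succ_iff.mp hlt
        have hξζstar : ξ < ζstar := lt_of_lt_of_le (hlt1 ξ) hζ'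
        obtain ⟨hsub', φ, hφgen, hφinj, -⟩ := hstep ξ hξζstar
        have hφeq : φ = canon Γ hsub' := eq_canon Γ hsub' φ hφgen
        rw [hφeq] at hφinj
        have hinj2 : Function.Injective (canon Γ (hmono ζ ξ hζξ hξζstar.le)) :=
          IH ξ (hlt1 ξ) hξζstar.le ζ hζξ _
        have hcomp : ∀ x, canon Γ h x = canon Γ hsub' (canon Γ (hmono ζ ξ hζξ hξζstar.le) x) :=
          fun x => (canon_comp_apply Γ (hmono ζ ξ hζξ hξζstar.le) hsub' x).symm
        intro a b hab
        rw [hcomp, hcomp] at hab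
        exact hinj2 (hφinj hab)
      · -- limit case
        rw [injective_iff_map_eq_zero]
        intro a ha
        obtain ⟨f, rfl⟩ := QuotientAddGroup.mk'_surjective (relSub Γ (Ξseq ζ)) a
        have hf : inclF h f ∈ relSub Γ (Ξseq ζ') := by
          rw [← QuotientAddGroup.eq_zero_iff]
          exact ha
        set K : {ξ : Ordinal // ξ < ζ'} → AddSubgroup (↥(Ξseq ζ') →₀ ℤ) :=
          fun ξ => (relSub Γ (Ξseq ξ.1)).map (inclF (hmono ξ.1 ζ' ξ.2.le hζ')) with hK
        have hKmono : ∀ ξ₁ ξ₂ : {ξ : Ordinal // ξ < ζ'}, ξ₁.1 ≤ ξ₂.1 → K ξ₁ ≤ K ξ₂ := by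
          rintro ⟨ξ₁, h₁⟩ ⟨ξ₂, h₂⟩ hle x hx
          obtain ⟨r, hr, rfl⟩ := hx
          refine ⟨inclF (hmono ξ₁ ξ₂ hle (le_trans h₂.le hζ')) r,
            relSub_map_le _ ⟨r, hr, rfl⟩, ?_⟩
          rw [inclF_comp]
        have hdir : Directed (· ≤ ·) K := fun ξ₁ ξ₂ =>
          ⟨⟨max ξ₁.1 ξ₂.1, max_lt ξ₁.2 ξ₂.2⟩, hKmono _ _ (le_max_left _ _),
            hKmono _ _ (le_max_right _ _)⟩
        have hrel_le : relSub Γ (Ξseq ζ') ≤ ⨆ ξ, K ξ := by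
          rw [relSub, AddSubgroup.closure_le]
          rintro x ⟨g, ⟨hgΓ, hgs⟩, rfl⟩
          obtain ⟨ξ, hξδ, hgξ⟩ := exists_stage ζstar Ξseq hmono ζ' hζ' hlim
            (hcont ζ' hζ' hlim) g.support hgs
          refine Set.mem_of_mem_of_subset ?_
            (SetLike.coe_subset_coe.mpr (le_iSup K ⟨ξ, hξδ⟩))
          exact ⟨Finsupp.subtypeDomain (· ∈ Ξseq ξ) g,
            AddSubgroup.subset_closure ⟨g, ⟨hgΓ, hgξ⟩, rfl⟩, inclF_subtypeDomain _ g hgξ⟩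
        haveI : Nonempty {ξ : Ordinal // ξ < ζ'} := ⟨⟨0, hlim.pos⟩⟩
        obtain ⟨⟨ξ, hξδ⟩, hmem⟩ := (AddSubgroup.mem_iSup_of_directed hdir).mp (hrel_le hf)
        have hξ'δ : max ξ ζ < ζ' := max_lt hξδ hlt
        have hmem' : inclF h f ∈ K ⟨max ξ ζ, hξ'δ⟩ :=
          hKmono ⟨ξ, hξδ⟩ ⟨max ξ ζ, hξ'δ⟩ (le_max_left _ _) hmem
        obtain ⟨r, hr, hre⟩ := hmem'
        have hfr : inclF (hmono ζ (max ξ ζ) (le_max_right _ _) (le_trans hξ'δ.le hζ')) f = r := by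
          apply inclF_injective (hmono (max ξ ζ) ζ' hξ'δ.le hζ')
          rw [inclF_comp]
          exact hre.symm
        have hz : canon Γ (hmono ζ (max ξ ζ) (le_max_right _ _) (le_trans hξ'δ.le hζ'))
            (QuotientAddGroup.mk f) = 0 := by
          rw [canon_mk, QuotientAddGroup.eq_zero_iff, hfr]
          exact hr
        have := (injective_iff_map_eq_zero _).mp
          (IH (max ξ ζ) hξ'δ (le_trans hξ'δ.le hζ') ζ (le_max_right _ _)
            (hmono ζ (max ξ ζ) (le_max_right _ _) (le_trans hξ'δ.le hζ'))) _ hz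
        exact this
  -- Covering of limit stages
  have cover : ∀ δ, δ ≤ ζstar → Order.IsSuccLimit δ → ∀ y : GG Γ (Ξseq δ),
      ∃ ξ, ∃ _ : ξ < δ, ∃ z : GG Γ (Ξseq ξ),
        ∀ (h : Ξseq ξ ⊆ Ξseq δ), canon Γ h z = y := by
    intro δ hδ hlim y
    obtain ⟨f, rfl⟩ := QuotientAddGroup.mk'_surjective (relSub Γ (Ξseq δ)) y
    obtain ⟨ξ, hξδ, hfs⟩ := exists_stage ζstar Ξseq hmono δ hδ hlim (hcont δ hδ hlim)
      (f.support.image Subtype.val)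
      (by rintro v hv
          rw [Finset.coe_image] at hv
          obtain ⟨⟨w, hw⟩, -, rfl⟩ := hv
          exact hw)
    have hf : f ∈ (inclF (hmono ξ δ hξδ.le hδ)).range := by
      rw [← Finsupp.sum_single f, Finsupp.sum]
      apply AddSubgroup.sum_mem
      rintro ⟨v, hvδ⟩ ha
      have hvξ : v ∈ Ξseq ξ := hfs (by
        rw [Finset.coe_image]
        exact ⟨⟨v, hvδ⟩, ha, rfl⟩)
      exact ⟨Finsupp.single ⟨v, hvξ⟩ (f ⟨v, hvδ⟩), inclF_single _ v hvξ _⟩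
    obtain ⟨g, hg⟩ := hf
    refine ⟨ξ, hξδ, QuotientAddGroup.mk g, fun h => ?_⟩
    rw [canon_mk]
    exact congrArg _ hg
  -- Assemble
  refine ⟨hsub, canon Γ hsub, fun v hv hv' => canon_gen Γ hsub v hv,
    key_inj ζstar le_rfl 0 zero_le hsub, ?_⟩
  set M := GG Γ (Ξseq ζstar) with hM
  set F : Ordinal → Submodule ℤ M := fun ζ =>
    if hζ : ζ ≤ ζstar then
      LinearMap.range (canon Γ (hmono ζ ζstar hζ le_rfl)).toIntLinearMap else ⊤ with hF
  have hFmem : ∀ ζ (hζ : ζ ≤ ζstar) (h : Ξseq ζ ⊆ Ξseq ζstar) (x : M),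
      x ∈ F ζ ↔ ∃ y, canon Γ h y = x := by
    intro ζ hζ h x
    rw [hF]
    simp only
    rw [dif_pos hζ]
    exact LinearMap.mem_range
  have hFmono : ∀ ζ ζ' : Ordinal, ζ ≤ ζ' → ζ' ≤ ζstar → F ζ ≤ F ζ' := by
    intro ζ ζ' hle hζ' x hx
    have hζ : ζ ≤ ζstar := hle.trans hζ'
    rw [hFmem ζ hζ (hmono ζ ζstar hζ le_rfl) x] at hx
    obtain ⟨y, rfl⟩ := hx
    rw [hFmem ζ' hζ' (hmono ζ' ζstar hζ' le_rfl)]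
    exact ⟨canon Γ (hmono ζ ζ' hle hζ') y, canon_comp_apply Γ _ _ y⟩
  have hFtop : F ζstar = ⊤ := by
    rw [eq_top_iff]
    intro x _
    rw [hFmem ζstar le_rfl (subset_refl _)]
    refine ⟨x, ?_⟩
    rw [canon_id]
    rfl
  have hFcont : ∀ δ, δ ≤ ζstar → Order.IsSuccLimit δ → F δ ≤ ⨆ ξ : {ξ : Ordinal // ξ < δ}, F ξ.1 := by
    intro δ hδ hlim x hx
    rw [hFmem δ hδ (hmono δ ζstar hδ le_rfl)] at hx
    obtain ⟨y, rfl⟩ := hx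
    obtain ⟨ξ, hξδ, z, hz⟩ := cover δ hδ hlim y
    have hξζstar : ξ ≤ ζstar := hξδ.le.trans hδ
    have hmem : canon Γ (hmono δ ζstar hδ le_rfl) y ∈ F ξ := by
      rw [hFmem ξ hξζstar (hmono ξ ζstar hξζstar le_rfl)]
      refine ⟨z, ?_⟩
      rw [← hz (hmono ξ δ hξδ.le hδ), canon_comp_apply]
    exact (le_iSup (fun ξ : {ξ : Ordinal // ξ < δ} => F ξ.1) ⟨ξ, hξδ⟩) hmem
  -- step data
  have hQfree : ∀ p : {ζ : Ordinal // ζ < ζstar}, Module.Free ℤ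
      (GG Γ (Ξseq (p.1 + 1)) ⧸ (canon Γ (hmono p.1 (p.1+1) (hle1 p.1) (hsucc p.1 p.2))).range) := by
    rintro ⟨ζ, hζ⟩
    obtain ⟨hsub', φ, hφgen, -, hfree⟩ := hstep ζ hζ
    rwa [eq_canon Γ (hmono ζ (ζ+1) (hle1 ζ) (hsucc ζ hζ)) φ hφgen] at hfree
  let Qt : {ζ : Ordinal // ζ < ζstar} → Type u := fun p =>
    GG Γ (Ξseq (p.1 + 1)) ⧸ (canon Γ (hmono p.1 (p.1+1) (hle1 p.1) (hsucc p.1 p.2))).range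
  let Ib : {ζ : Ordinal // ζ < ζstar} → Type u := fun p =>
    @Module.Free.ChooseBasisIndex ℤ (Qt p) _ _ _ (hQfree p)
  let bas : ∀ p, Module.Basis (Ib p) ℤ (Qt p) := fun p =>
    @Module.Free.chooseBasis ℤ (Qt p) _ _ _ (hQfree p)
  have hqlift : ∀ p, ∃ ql : Ib p → GG Γ (Ξseq (p.1 + 1)),
      ∀ i, QuotientAddGroup.mk' _ (ql i) = bas p i := fun p =>
    ⟨fun i => Classical.choose (QuotientAddGroup.mk'_surjective _ (bas p i)),
      fun i => Classical.choose_spec (QuotientAddGroup.mk'_surjective _ (bas p i))⟩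
  choose qlift hql using hqlift
  set q : ((p : {ζ : Ordinal // ζ < ζstar}) × Ib p) → M := fun pi =>
    canon Γ (hmono (pi.1.1 + 1) ζstar (hsucc pi.1.1 pi.1.2) le_rfl) (qlift pi.1 pi.2) with hq
  set st : ((p : {ζ : Ordinal // ζ < ζstar}) × Ib p) → Ordinal := fun pi => pi.1.1 with hst'
  have hFgen : ∀ ζ, ζ < ζstar → F (ζ + 1) ≤ F ζ ⊔ Submodule.span ℤ (q '' {pi | st pi = ζ}) := by
    intro ζ hζ x hx
    set p : {ζ : Ordinal // ζ < ζstar} := ⟨ζ, hζ⟩ with hp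
    set Hs : AddSubgroup (GG Γ (Ξseq (ζ + 1))) :=
      (canon Γ (hmono ζ (ζ+1) (hle1 ζ) (hsucc ζ hζ))).range with hHs
    rw [hFmem (ζ+1) (hsucc ζ hζ) (hmono (ζ+1) ζstar (hsucc ζ hζ) le_rfl)] at hx
    obtain ⟨y, rfl⟩ := hx
    have hy : y ∈ (AddSubgroup.toIntSubmodule Hs) ⊔ Submodule.span ℤ (Set.range (qlift p)) := by
      have h1 : (QuotientAddGroup.mk' Hs).toIntLinearMap y
          ∈ Submodule.span ℤ (Set.range (bas p)) := Module.Basis.mem_span _ _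
      have h2 : Set.range (bas p)
          = (QuotientAddGroup.mk' Hs).toIntLinearMap '' Set.range (qlift p) := by
        ext w
        constructor
        · rintro ⟨i, rfl⟩
          exact ⟨qlift p i, ⟨i, rfl⟩, hql p i⟩
        · rintro ⟨z, ⟨i, rfl⟩, rfl⟩
          exact ⟨i, (hql p i).symm⟩
      rw [h2, ← Submodule.map_span] at h1
      obtain ⟨w, hwspan, hww⟩ := h1
      have hyw : y - w ∈ Hs := by
        rw [← QuotientAddGroup.eq_zero_iff]
        have : QuotientAddGroup.mk' Hs (y - w) = 0 := by
          rw [map_sub]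
          rw [show QuotientAddGroup.mk' Hs w = QuotientAddGroup.mk' Hs y from hww]
          exact sub_self _
        exact this
      rw [show y = (y - w) + w by rw [sub_add_cancel]]
      exact Submodule.add_mem_sup (show y - w ∈ AddSubgroup.toIntSubmodule Hs from hyw) hwspan
    obtain ⟨a, ha, b, hb, hab⟩ := Submodule.mem_sup.mp hy
    rw [← hab, map_add]
    apply Submodule.add_mem
    · apply Submodule.mem_sup_left
      have ha' : a ∈ Hs := ha
      obtain ⟨z, hz⟩ := AddMonoidHom.mem_range.mp ha'
      rw [hFmem ζ hζ.le (hmono ζ ζstar hζ.le le_rfl)]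
      refine ⟨z, ?_⟩
      rw [show (a : GG Γ (Ξseq (ζ+1))) = canon Γ (hmono ζ (ζ+1) (hle1 ζ) (hsucc ζ hζ)) z
        from hz.symm]
      exact (canon_comp_apply Γ _ _ z).symm
    · apply Submodule.mem_sup_right
      have hbm : (canon Γ (hmono (ζ+1) ζstar (hsucc ζ hζ) le_rfl)).toIntLinearMap b
          ∈ Submodule.map (canon Γ (hmono (ζ+1) ζstar (hsucc ζ hζ) le_rfl)).toIntLinearMap
            (Submodule.span ℤ (Set.range (qlift p))) := Submodule.mem_map_of_mem hb
      rw [Submodule.map_span, ← Set.range_comp] at hbm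
      refine Submodule.span_mono ?_ hbm
      rintro _ ⟨i, rfl⟩
      exact ⟨⟨p, i⟩, rfl, rfl⟩
  have hFind : ∀ (c : ((p : {ζ : Ordinal // ζ < ζstar}) × Ib p) →₀ ℤ) (ζ₀ : Ordinal),
      (∀ pi ∈ c.support, st pi = ζ₀) → (c.sum fun pi n => n • q pi) ∈ F ζ₀ → c = 0 := by
    intro c ζ₀ hcs hcsum
    by_cases hc0 : c = 0
    · exact hc0
    obtain ⟨pi₀, hpi₀⟩ := Finsupp.support_nonempty_iff.mpr hc0
    have hζ₀ : ζ₀ < ζstar := by rw [← hcs pi₀ hpi₀]; exact pi₀.1.2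
    set p : {ζ : Ordinal // ζ < ζstar} := ⟨ζ₀, hζ₀⟩ with hp
    have hsupp : (c.support : Set ((p : {ζ : Ordinal // ζ < ζstar}) × Ib p)) ⊆ Set.range (Sigma.mk p) := by
      rintro ⟨p', i⟩ hpi
      have h2 : p' = p := Subtype.ext (hcs ⟨p', i⟩ hpi)
      subst h2
      exact ⟨i, rfl⟩
    set c' := Finsupp.comapDomain (Sigma.mk p) c sigma_mk_injective.injOn with hc'def
    have hc' : Finsupp.mapDomain (Sigma.mk p) c' = c :=
      Finsupp.mapDomain_comapDomain _ sigma_mk_injective c hsupp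
    have hsum' : (c.sum fun pi n => n • q pi) = c'.sum fun i n => n • q ⟨p, i⟩ := by
      rw [← hc']
      exact Finsupp.sum_mapDomain_index (fun i => zero_zsmul _) (fun i m n => add_zsmul _ m n)
    set w : GG Γ (Ξseq (ζ₀ + 1)) := c'.sum fun i n => n • qlift p i with hw'
    have hw : (c.sum fun pi n => n • q pi)
        = canon Γ (hmono (ζ₀+1) ζstar (hsucc ζ₀ hζ₀) le_rfl) w := by
      rw [hsum', hw', map_finsuppSum]
      exact Finsupp.sum_congr fun i _ => (map_zsmul _ _ _).symm
    rw [hw, hFmem ζ₀ hζ₀.le (hmono ζ₀ ζstar hζ₀.le le_rfl)] at hcsum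
    obtain ⟨z, hz⟩ := hcsum
    have hwH : w ∈ (canon Γ (hmono ζ₀ (ζ₀+1) (hle1 ζ₀) (hsucc ζ₀ hζ₀))).range := by
      refine ⟨z, ?_⟩
      apply key_inj ζstar le_rfl (ζ₀+1) (hsucc ζ₀ hζ₀)
        (hmono (ζ₀+1) ζstar (hsucc ζ₀ hζ₀) le_rfl)
      rw [canon_comp_apply]
      exact hz
    have hmk : QuotientAddGroup.mk'
        ((canon Γ (hmono ζ₀ (ζ₀+1) (hle1 ζ₀) (hsucc ζ₀ hζ₀))).range) w = 0 :=
      (QuotientAddGroup.eq_zero_iff w).mpr hwH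
    have hlc : Finsupp.linearCombination ℤ (bas p) c' = 0 := by
      rw [Finsupp.linearCombination_apply]
      have hms : QuotientAddGroup.mk'
          ((canon Γ (hmono ζ₀ (ζ₀+1) (hle1 ζ₀) (hsucc ζ₀ hζ₀))).range) w
          = c'.sum fun i n => n • bas p i := by
        rw [hw', map_finsuppSum]
        exact Finsupp.sum_congr fun i _ => by rw [map_zsmul, hql p i]
      rw [← hms, hmk]
    have hc'0 : c' = 0 := by
      have hli := (bas p).linearIndependent
      rw [linearIndependent_iff] at hli
      exact hli c' hlc
    rw [← hc', hc'0, Finsupp.mapDomain_zero]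
  exact free_of_filtration (QuotientAddGroup.mk' ((canon Γ hsub).range))
    (QuotientAddGroup.mk'_surjective _) ζstar F
    (fun x => by
      rw [hFmem 0 zero_le hsub x]
      exact (QuotientAddGroup.eq_zero_iff x).trans
        (by exact Iff.rfl))
    hFmono hFtop hFcont q st (fun pi => pi.1.2)
    (fun pi => by
      rw [hFmem (st pi + 1) (hsucc _ pi.1.2) (hmono (st pi + 1) ζstar (hsucc _ pi.1.2) le_rfl)]
      exact ⟨qlift pi.1 pi.2, rfl⟩)
    hFgen hFind

end Sh521
end

section
/- Let S be a λ-set, κ a regular cardinal with λ(η,S) > κ for every η ∈ S_i, and G : S_f → κ a function. Then there is a sub-λ-set S¹ ≤ S such that G is constant on S¹_f. -/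
open Set

namespace Sh521


/-- Finite sequences of ordinals. -/
abbrev Seq := List Ordinal

/-- `W(η,S) = { i : η⌢⟨i⟩ ∈ S }`. -/
def Wset (S : Set Seq) (η : Seq) : Set Ordinal := {i | η ++ [i] ∈ S}

/-- `λ(η,S) = sup W(η,S)`. -/
noncomputable def lamOf (S : Set Seq) (η : Seq) : Ordinal := sSup (Wset S η)

/-- An ordinal which is a regular uncountable cardinal. -/
def IsRegUncountable (o : Ordinal) : Prop :=
  ∃ κ : Cardinal, κ.IsRegular ∧ Cardinal.aleph0 < κ ∧ o = κ.ord

/-- `C` is unbounded below `κ`. -/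
def UnboundedBelow (C : Set Ordinal) (κ : Ordinal) : Prop :=
  ∀ α < κ, ∃ β ∈ C, α ≤ β ∧ β < κ

/-- `C` is closed below `κ`: any limit ordinal `< κ` which is approached by members
of `C` belongs to `C`. -/
def ClosedBelow (C : Set Ordinal) (κ : Ordinal) : Prop :=
  ∀ δ < κ, Order.IsSuccLimit δ → (∀ β < δ, ∃ γ ∈ C, β ≤ γ ∧ γ < δ) → δ ∈ C

/-- `C` is a stationary subset of `κ`: it meets every club of `κ`. -/
def StationaryBelow (C : Set Ordinal) (κ : Ordinal) : Prop :=
  ∀ D : Set Ordinal, ClosedBelow D κ → UnboundedBelow D κ → (C ∩ D).Nonempty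

/-- Definition 3.1: `S` is a `λ`-set: a nonempty set of strictly decreasing finite
sequences of ordinals `< λ`, closed under initial segments, such that whenever
`W(η,S) ≠ ∅`, `λ(η,S)` is a regular uncountable cardinal and `W(η,S)` is stationary
in it; and `λ(⟨⟩,S) = λ`. -/
def IsLambdaSet (lam : Ordinal) (S : Set Seq) : Prop :=
  S.Nonempty ∧
  (∀ η ∈ S, List.Chain' (fun a b => a > b) η) ∧
  (∀ η ∈ S, ∀ i ∈ η, i < lam) ∧
  (∀ η ∈ S, ∀ ν : Seq, ν <+: η → ν ∈ S) ∧
  (∀ η ∈ S, (Wset S η).Nonempty →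
    IsRegUncountable (lamOf S η) ∧ StationaryBelow (Wset S η) (lamOf S η)) ∧
  lamOf S [] = lam

/-- The final elements of `S`. -/
def Sf (S : Set Seq) : Set Seq := {η | η ∈ S ∧ Wset S η = ∅}

/-- The initial elements of `S`. -/
def Si (S : Set Seq) : Set Seq := S \ Sf S

/-- `S¹ ≤ S²` : `S¹` is a sub-`λ`-set of `S²`. -/
def SubLambdaSet (S1 S2 : Set Seq) : Prop :=
  S1 ⊆ S2 ∧ ∀ η ∈ S1, lamOf S1 η = lamOf S2 η

end Sh521

namespace Sh521
open Cardinal in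
section
lemma lt_add_one' (a : Ordinal) : a < a + 1 := by
  rw [Ordinal.add_one_eq_succ]; exact Order.lt_succ a

lemma closedBelow_univ (θ : Ordinal) : ClosedBelow univ θ := fun _ _ _ _ => mem_univ _
lemma unboundedBelow_univ (θ : Ordinal) : UnboundedBelow univ θ :=
  fun α hα => ⟨α, mem_univ _, le_rfl, hα⟩

lemma StationaryBelow.nonempty {C : Set Ordinal} {θ : Ordinal} (h : StationaryBelow C θ) :
    C.Nonempty := by
  obtain ⟨x, hx, -⟩ := h univ (closedBelow_univ θ) (unboundedBelow_univ θ)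
  exact ⟨x, hx⟩

lemma StationaryBelow.unbounded {C : Set Ordinal} {θ : Ordinal} (h : StationaryBelow C θ) :
    UnboundedBelow C θ := by
  intro α hα
  obtain ⟨β, hβmem⟩ := h {β | α ≤ β ∧ β < θ}
    (fun δ hδ hlim happ => by
      obtain ⟨γ, ⟨hαγ, -⟩, -, hγδ⟩ := happ 0 (pos_iff_ne_zero.mpr (Ordinal.isSuccLimit_iff.mp hlim).1)
      exact ⟨hαγ.trans hγδ.le, hδ⟩)
    (fun β hβ => ⟨max α β, ⟨le_max_left _ _, max_lt hα hβ⟩, le_max_right _ _, max_lt hα hβ⟩)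
  obtain ⟨hβC, hβD⟩ := hβmem
  simp only [mem_setOf_eq] at hβD
  exact ⟨β, hβC, hβD.1, hβD.2⟩

/-- Intersection of fewer than `θ` clubs below a regular uncountable `θ` is a club. -/
lemma club_iInter {θc : Cardinal} (hreg : θc.IsRegular) (hunc : Cardinal.aleph0 < θc)
    {κo : Ordinal} (hκθ : κo < θc.ord) (hκ0 : κo ≠ 0)
    (D : Ordinal → Set Ordinal)
    (hcl : ∀ c < κo, ClosedBelow (D c) θc.ord)
    (hub : ∀ c < κo, UnboundedBelow (D c) θc.ord) :
    ClosedBelow (⋂ c ∈ Iio κo, D c) θc.ord ∧ UnboundedBelow (⋂ c ∈ Iio κo, D c) θc.ord := by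
  set θ := θc.ord with hθ
  have hθlim : Order.IsSuccLimit θ := Cardinal.isSuccLimit_ord hreg.aleph0_le
  constructor
  · intro δ hδ hlim happ
    refine mem_iInter₂.mpr fun c hc => hcl c hc δ hδ hlim fun β hβ => ?_
    obtain ⟨γ, hγ, hβγ, hγδ⟩ := happ β hβ
    exact ⟨γ, mem_iInter₂.mp hγ c hc, hβγ, hγδ⟩
  · intro α hα
    set ι := κo.ToType with hι
    haveI : Nonempty ι := Ordinal.nonempty_toType_iff.mpr hκ0
    set e := @Ordinal.ToType.mk κo with he
    have hcard : #ι < θ.cof := by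
      rw [hreg.cof_eq, hι, Cardinal.mk_toType]
      exact Cardinal.lt_ord.mp hκθ
    -- the next element of D c above β
    have hnxt : ∀ (β : Ordinal), β < θ → ∀ j : ι,
        ∃ γ ∈ D (e.symm j).1, β + 1 ≤ γ ∧ γ < θ := by
      intro β hβ j
      have : β + 1 < θ := by
        rw [Ordinal.add_one_eq_succ]; exact hθlim.succ_lt hβ
      exact hub (e.symm j).1 (e.symm j).2 (β + 1) this
    classical
    let nxt : Ordinal → ι → Ordinal := fun β j =>
      if h : β < θ then (hnxt β h j).choose else 0
    have hnxt1 : ∀ β (hβ : β < θ) (j : ι), nxt β j ∈ D (e.symm j).1 ∧ β + 1 ≤ nxt β j ∧ nxt β j < θ := by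
      intro β hβ j
      simp only [nxt, dif_pos hβ]
      exact (hnxt β hβ j).choose_spec
    let g : ℕ → Ordinal := fun n => Nat.rec α (fun _ prev => ⨆ j : ι, nxt prev j) n
    have hg0 : g 0 = α := rfl
    have hgs : ∀ n, g (n + 1) = ⨆ j : ι, nxt (g n) j := fun n => rfl
    have key : ∀ n, g n < θ ∧ g n < g (n + 1) := by
      intro n
      induction n with
      | zero =>
        refine ⟨hα, ?_⟩
        obtain ⟨j⟩ := ‹Nonempty ι›
        calc g 0 < g 0 + 1 := lt_add_one' _
          _ ≤ nxt (g 0) j := (hnxt1 _ hα j).2.1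
          _ ≤ _ := by rw [hgs]; exact Ordinal.le_iSup _ j
      | succ n ih =>
        have hlt : g (n+1) < θ := by
          rw [hgs]
          exact Ordinal.iSup_lt_ord hcard fun j => (hnxt1 _ ih.1 j).2.2
        refine ⟨hlt, ?_⟩
        obtain ⟨j⟩ := ‹Nonempty ι›
        calc g (n+1) < g (n+1) + 1 := lt_add_one' _
          _ ≤ nxt (g (n+1)) j := (hnxt1 _ hlt j).2.1
          _ ≤ _ := by rw [hgs (n+1)]; exact Ordinal.le_iSup _ j
    have hgmono : StrictMono g := strictMono_nat_of_lt_succ fun n => (key n).2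
    set δ := ⨆ n, g n with hδ
    have hgle : ∀ n, g n ≤ δ := fun n => Ordinal.le_iSup g n
    have hδθ : δ < θ :=
      Ordinal.iSup_lt_ord_lift (c := θ) (by rw [Cardinal.mk_nat, Cardinal.lift_aleph0, hreg.cof_eq]; exact hunc)
        (fun n => (key n).1)
    have hlt_δ : ∀ n, g n < δ := fun n => lt_of_lt_of_le (key n).2 (hgle (n+1))
    have hδlim : Order.IsSuccLimit δ := by
      rw [Ordinal.isSuccLimit_iff, Order.isSuccPrelimit_iff_succ_lt]
      constructor
      · exact fun h0 => absurd (h0 ▸ hlt_δ 0) (by simp)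
      · intro a ha
        obtain ⟨n, hn⟩ := Ordinal.lt_iSup_iff.mp ha
        exact lt_of_le_of_lt (Order.succ_le_of_lt hn) (hlt_δ n)
    have hδmem : ∀ c < κo, δ ∈ D c := by
      intro c hc
      refine hcl c hc δ hδθ hδlim fun β hβ => ?_
      obtain ⟨n, hn⟩ := Ordinal.lt_iSup_iff.mp hβ
      refine ⟨nxt (g n) (e ⟨c, hc⟩), ?_, ?_, ?_⟩
      · have := (hnxt1 _ (key n).1 (e ⟨c, hc⟩)).1
        rwa [OrderIso.symm_apply_apply] at this
      · exact le_of_lt (lt_of_lt_of_le hn (le_of_lt (lt_of_lt_of_le (lt_add_one' _)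
          (hnxt1 _ (key n).1 _).2.1)))
      · calc nxt (g n) (e ⟨c, hc⟩) ≤ g (n+1) := by
              rw [hgs]; exact Ordinal.le_iSup _ _
          _ < δ := hlt_δ (n+1)
    exact ⟨δ, mem_iInter₂.mpr hδmem, hg0 ▸ hgle 0, hδθ⟩



/-- Splitting a stationary set into fewer than `θ` pieces, one piece is stationary. -/
lemma exists_stationary_fiber {θc : Cardinal} (hreg : θc.IsRegular) (hunc : Cardinal.aleph0 < θc)
    {κo : Ordinal} (hκθ : κo < θc.ord) (hκ0 : κo ≠ 0) {C : Set Ordinal}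
    (hC : StationaryBelow C θc.ord) (f : Ordinal → Ordinal) (hf : ∀ i ∈ C, f i < κo) :
    ∃ c, c < κo ∧ StationaryBelow {i | i ∈ C ∧ f i = c} θc.ord := by
  by_contra hcon
  push_neg at hcon
  classical
  have hD : ∀ c < κo, ∃ D : Set Ordinal, ClosedBelow D θc.ord ∧ UnboundedBelow D θc.ord ∧
      ({i | i ∈ C ∧ f i = c} ∩ D) = ∅ := by
    intro c hc
    have := hcon c hc
    unfold StationaryBelow at this
    push_neg at this
    obtain ⟨D, h1, h2, h3⟩ := this
    exact ⟨D, h1, h2, h3⟩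
  let D : Ordinal → Set Ordinal := fun c =>
    if hc : c < κo then (hD c hc).choose else univ
  have hDcl : ∀ c < κo, ClosedBelow (D c) θc.ord := by
    intro c hc; simp only [D, dif_pos hc]; exact (hD c hc).choose_spec.1
  have hDub : ∀ c < κo, UnboundedBelow (D c) θc.ord := by
    intro c hc; simp only [D, dif_pos hc]; exact (hD c hc).choose_spec.2.1
  have hDdisj : ∀ c < κo, ({i | i ∈ C ∧ f i = c} ∩ D c) = ∅ := by
    intro c hc; simp only [D, dif_pos hc]; exact (hD c hc).choose_spec.2.2
  obtain ⟨hcl, hub⟩ := club_iInter hreg hunc hκθ hκ0 D hDcl hDub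
  obtain ⟨i, hiC, hiT⟩ := hC _ hcl hub
  have hfi : f i < κo := hf i hiC
  have : i ∈ ({j | j ∈ C ∧ f j = f i} ∩ D (f i)) :=
    ⟨⟨hiC, rfl⟩, mem_iInter₂.mp hiT (f i) hfi⟩
  rw [hDdisj (f i) hfi] at this
  exact this
/-- The "last entry" measure: `lam` for the empty sequence. -/
def mu (lam : Ordinal) (η : Seq) : Ordinal := η.getLast?.getD lam

lemma mu_nil (lam : Ordinal) : mu lam [] = lam := rfl

lemma mu_concat (lam i : Ordinal) (η : Seq) : mu lam (η ++ [i]) = i := by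
  simp [mu, List.getLast?_concat]

/-- Extensions in `S` have small last entries. -/
def Good (lam : Ordinal) (S : Set Seq) (η : Seq) : Prop := ∀ i ∈ Wset S η, i < mu lam η

open scoped Classical in
/-- The recursive labeling: at a final node, `G`; at an inner node, a value `< κ.ord`
attained by the labels of the successors on a stationary set. -/
noncomputable def F (lam : Ordinal) (S : Set Seq) (κ : Cardinal) (G : Seq → Ordinal)
    (η : Seq) : Ordinal :=
  if h : Good lam S η ∧ (Wset S η).Nonempty then
    (if hc : ∃ c, c < κ.ord ∧ StationaryBelow
        {i | ∃ _ : i ∈ Wset S η, F lam S κ G (η ++ [i]) = c} (lamOf S η)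
      then hc.choose else 0)
  else G η
termination_by mu lam η
decreasing_by
  all_goals (simp only [mu_concat]; exact h.1 _ ‹_›)

lemma F_final {lam : Ordinal} {S : Set Seq} {κ : Cardinal} {G : Seq → Ordinal} {η : Seq}
    (hW : Wset S η = ∅) : F lam S κ G η = G η := by
  rw [F, dif_neg]
  simp [hW]

lemma F_inner {lam : Ordinal} {S : Set Seq} {κ : Cardinal} {G : Seq → Ordinal} {η : Seq}
    (hGood : Good lam S η) (hW : (Wset S η).Nonempty)
    (hc : ∃ c, c < κ.ord ∧ StationaryBelow
        {i | ∃ _ : i ∈ Wset S η, F lam S κ G (η ++ [i]) = c} (lamOf S η)) :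
    F lam S κ G η = hc.choose := by
  rw [F, dif_pos ⟨hGood, hW⟩, dif_pos hc]

lemma good_of_mem {lam : Ordinal} {S : Set Seq} (hS : IsLambdaSet lam S) {η : Seq}
    (hη : η ∈ S) : Good lam S η := by
  intro i hi
  rcases eq_or_ne η ([] : Seq) with rfl | hne
  · have : i < lam := hS.2.2.1 ([] ++ [i]) hi i (by simp)
    simpa [mu_nil] using this
  · have hchain := hS.2.1 (η ++ [i]) hi
    change List.IsChain _ _ at hchain
    rw [List.isChain_append] at hchain
    obtain ⟨-, -, hlast⟩ := hchain
    have hl : η.getLast hne > i := by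
      refine hlast (η.getLast hne) ?_ i rfl
      rw [List.getLast?_eq_getLast hne]; rfl
    have hmu : mu lam η = η.getLast hne := by
      rw [mu, List.getLast?_eq_getLast hne]; rfl
    rw [hmu]; exact hl

lemma F_spec {lam : Ordinal} {S : Set Seq} (hS : IsLambdaSet lam S) {κ : Cardinal}
    (hκ : κ.IsRegular) (hgt : ∀ η ∈ Si S, κ.ord < lamOf S η) {G : Seq → Ordinal}
    (hG : ∀ η ∈ Sf S, G η < κ.ord) :
    ∀ η ∈ S, F lam S κ G η < κ.ord ∧
      ((Wset S η).Nonempty → StationaryBelow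
        {i | i ∈ Wset S η ∧ F lam S κ G (η ++ [i]) = F lam S κ G η} (lamOf S η)) := by
  suffices h : ∀ o : Ordinal, ∀ η ∈ S, mu lam η = o →
      (F lam S κ G η < κ.ord ∧
      ((Wset S η).Nonempty → StationaryBelow
        {i | i ∈ Wset S η ∧ F lam S κ G (η ++ [i]) = F lam S κ G η} (lamOf S η))) by
    exact fun η hη => h _ η hη rfl
  intro o
  induction o using Ordinal.induction with
  | h o IH =>
    intro η hη hmu
    rcases (Wset S η).eq_empty_or_nonempty with hW | hW
    · rw [F_final hW]
      refine ⟨hG η ⟨hη, hW⟩, fun h => ?_⟩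
      rw [hW] at h; exact absurd h (by simp)
    · have hSi : η ∈ Si S := ⟨hη, fun hf => hW.ne_empty hf.2⟩
      obtain ⟨hreg', hstat⟩ := hS.2.2.2.2.1 η hη hW
      obtain ⟨θc, hregθ, huncθ, hθ⟩ := hreg'
      have hκθ : κ.ord < θc.ord := hθ ▸ hgt η hSi
      have hκ0 : κ.ord ≠ 0 := hκ.ord_pos.ne'
      have hIH : ∀ i ∈ Wset S η, F lam S κ G (η ++ [i]) < κ.ord := by
        intro i hi
        have hlt : mu lam (η ++ [i]) < o := by
          rw [mu_concat, ← hmu]; exact good_of_mem hS hη i hi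
        exact (IH _ hlt (η ++ [i]) hi rfl).1
      have hstat' : StationaryBelow (Wset S η) θc.ord := hθ ▸ hstat
      have hex0 := exists_stationary_fiber hregθ huncθ hκθ hκ0 hstat'
        (fun i => F lam S κ G (η ++ [i])) hIH
      have hex : ∃ c, c < κ.ord ∧ StationaryBelow
          {i | ∃ _ : i ∈ Wset S η, F lam S κ G (η ++ [i]) = c} (lamOf S η) := by
        obtain ⟨c, hc1, hc2⟩ := hex0
        refine ⟨c, hc1, ?_⟩
        rw [hθ]
        convert hc2 using 2
        ext i; simp [exists_prop]
      have hFη := F_inner (good_of_mem hS hη) hW hex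
      refine ⟨hFη ▸ hex.choose_spec.1, fun _ => ?_⟩
      have hst := hex.choose_spec.2
      rw [hFη]
      convert hst using 2
      ext i; simp [exists_prop]

/-- Claim 3.2(1). If `S` is a `λ`-set, `κ` is regular with
`λ(η,S) > κ` for every `η ∈ S_i`, and `G : S_f → κ`, then there is a sub-`λ`-set
`S¹ ≤ S` on which `G` is constant on `S¹_f`. -/
theorem constant_on_sub_lambdaSet (lam : Ordinal) (S : Set Seq) (hS : IsLambdaSet lam S)
    (κ : Cardinal) (hκ : κ.IsRegular) (hgt : ∀ η ∈ Si S, κ.ord < lamOf S η)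
    (G : Seq → Ordinal) (hG : ∀ η ∈ Sf S, G η < κ.ord) :
    ∃ S1 : Set Seq, IsLambdaSet lam S1 ∧ SubLambdaSet S1 S ∧
      ∃ c : Ordinal, ∀ η ∈ Sf S1, G η = c := by
  set Fv : Seq → Ordinal := F lam S κ G with hFv
  set S1 : Set Seq := {η | η ∈ S ∧ ∀ n < η.length, Fv (η.take (n+1)) = Fv (η.take n)}
    with hS1
  have hsub : S1 ⊆ S := fun η h => h.1
  have hnilS : [] ∈ S := hS.2.2.2.1 hS.1.choose hS.1.choose_spec [] List.nil_prefix
  have hnil1 : [] ∈ S1 := ⟨hnilS, by intro n hn; simp at hn⟩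
  have hpre : ∀ η ∈ S1, ∀ ν : Seq, ν <+: η → ν ∈ S1 := by
    intro η hη ν hν
    refine ⟨hS.2.2.2.1 η (hsub hη) ν hν, ?_⟩
    intro n hn
    have hν' : ν = η.take ν.length := List.prefix_iff_eq_take.mp hν
    have h1 : ν.take (n+1) = η.take (n+1) := by
      rw [hν', List.take_take]; congr 1; omega
    have h2 : ν.take n = η.take n := by
      rw [hν', List.take_take]; congr 1; omega
    have hlen : ν.length ≤ η.length := hν.length_le
    rw [h1, h2]
    exact hη.2 n (by omega)
  have hWeq : ∀ η ∈ S1, Wset S1 η = {i | i ∈ Wset S η ∧ Fv (η ++ [i]) = Fv η} := by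
    intro η hη
    ext i
    simp only [Wset, mem_setOf_eq, hS1]
    constructor
    · rintro ⟨hmem, hcond⟩
      have h1 := hcond η.length (by simp)
      rw [show (η ++ [i]).take (η.length + 1) = η ++ [i] by
            rw [show η.length + 1 = (η ++ [i]).length by simp, List.take_length],
          show (η ++ [i]).take η.length = η by
            rw [List.take_append_of_le_length le_rfl, List.take_length]] at h1
      exact ⟨hmem, h1⟩
    · rintro ⟨hmem, heq⟩
      refine ⟨hmem, ?_⟩
      intro n hn
      rw [List.length_append, List.length_singleton] at hn
      rcases Nat.lt_or_ge n η.length with h | h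
      · rw [List.take_append_of_le_length (by omega), List.take_append_of_le_length (by omega)]
        exact hη.2 n h
      · have hn' : n = η.length := by omega
        rw [hn',
          show (η ++ [i]).take (η.length + 1) = η ++ [i] by
              rw [show η.length + 1 = (η ++ [i]).length by simp, List.take_length],
          show (η ++ [i]).take η.length = η by
              rw [List.take_append_of_le_length le_rfl, List.take_length]]
        exact heq
  have hspec := F_spec hS hκ hgt hG
  have hsubW : ∀ η ∈ S1, Wset S1 η ⊆ Wset S η := by
    intro η hη
    rw [hWeq η hη]; exact fun i hi => hi.1
  have hstat1 : ∀ η ∈ S1, (Wset S η).Nonempty → StationaryBelow (Wset S1 η) (lamOf S η) := by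
    intro η hη hW
    rw [hWeq η hη]
    exact (hspec η (hsub hη)).2 hW
  have hfinal_agree : ∀ η ∈ S1, Wset S1 η = ∅ → Wset S η = ∅ := by
    intro η hη h1
    by_contra hne
    have := (hstat1 η hη (nonempty_iff_ne_empty.mpr hne)).nonempty
    rw [h1] at this
    exact absurd this (by simp)
  have hbdd : ∀ η ∈ S, BddAbove (Wset S η) :=
    fun η hη => ⟨lam, fun i hi => (hS.2.2.1 _ hi i (by simp)).le⟩
  have hlamEq : ∀ η ∈ S1, lamOf S1 η = lamOf S η := by
    intro η hη
    rcases (Wset S η).eq_empty_or_nonempty with hW | hW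
    · have h1 : Wset S1 η = ∅ :=
        eq_empty_of_subset_empty (hW ▸ hsubW η hη)
      rw [lamOf, lamOf, h1, hW]
    · obtain ⟨⟨θc, hregθ, huncθ, hθ⟩, -⟩ := hS.2.2.2.2.1 η (hsub hη) hW
      have hstat : StationaryBelow (Wset S1 η) (lamOf S η) := hstat1 η hη hW
      have hne1 : (Wset S1 η).Nonempty := hstat.nonempty
      rw [lamOf, lamOf]
      apply le_antisymm
      · exact csSup_le_csSup (hbdd η (hsub hη)) hne1 (hsubW η hη)
      · by_contra hlt
        push_neg at hlt
        have hθlim : Order.IsSuccLimit (lamOf S η) := hθ ▸ Cardinal.isSuccLimit_ord hregθ.aleph0_le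
        have hsucc : sSup (Wset S1 η) + 1 < lamOf S η := by
          rw [Ordinal.add_one_eq_succ]; exact hθlim.succ_lt hlt
        obtain ⟨β, hβ, hle, -⟩ := hstat.unbounded _ hsucc
        have hβle : β ≤ sSup (Wset S1 η) :=
          le_csSup ((hbdd η (hsub hη)).mono (hsubW η hη)) hβ
        have h2 : sSup (Wset S1 η) < β := lt_of_lt_of_le (lt_add_one' _) hle
        exact absurd hβle (not_le.mpr h2)
  have hconst : ∀ η ∈ S1, Fv η = Fv [] := by
    intro η hη
    have aux : ∀ n, n ≤ η.length → Fv (η.take n) = Fv [] := by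
      intro n
      induction n with
      | zero => intro _; rw [List.take_zero]
      | succ n ih => intro hn; rw [hη.2 n (by omega), ih (by omega)]
    have := aux η.length le_rfl
    rwa [List.take_length] at this
  refine ⟨S1, ?_, ⟨hsub, hlamEq⟩, Fv [], ?_⟩
  · refine ⟨⟨[], hnil1⟩, fun η h => hS.2.1 η (hsub h), fun η h => hS.2.2.1 η (hsub h),
      fun η h ν hν => hpre η h ν hν, ?_, ?_⟩
    · intro η hη hWne
      have hW : (Wset S η).Nonempty := hWne.mono (hsubW η hη)
      refine ⟨?_, ?_⟩
      · rw [hlamEq η hη]; exact (hS.2.2.2.2.1 η (hsub hη) hW).1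
      · rw [hlamEq η hη]; exact hstat1 η hη hW
    · rw [hlamEq [] hnil1]; exact hS.2.2.2.2.2
  · intro η hη
    obtain ⟨hη1, hWe⟩ := hη
    have hWS : Wset S η = ∅ := hfinal_agree η hη1 hWe
    have h1 : Fv η = G η := F_final hWS
    rw [← h1]
    exact hconst η hη1

end
end Sh521
end

section
/- Let S be a λ-set and F a function with domain S \ {⟨⟩} such that F(η⌢⟨α⟩) < 1 + α for every η⌢⟨α⟩ ∈ S. Then there is a sub-λ-set S¹ ≤ S on which F is essentially constant: for each m, F is constant on { η ∈ S¹ : length(η) = m } ∩ (S¹ \ {⟨⟩}). -/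
open Set

namespace Sh521

universe u
variable {c : Cardinal.{u}} {κ : Ordinal.{u}}

lemma omega0_lt_ord (hreg : c.IsRegular) (hunc : Cardinal.aleph0 < c) :
    Ordinal.omega0 < c.ord := by
  rw [← Cardinal.ord_aleph0]; exact Cardinal.ord_lt_ord.mpr hunc

lemma tail_restrict_club (hlim : Order.IsSuccLimit κ) {C : Set Ordinal}
    (hC : ClosedBelow C κ ∧ UnboundedBelow C κ) {γ₀ : Ordinal} (hγ₀ : γ₀ < κ) :
    ClosedBelow {α | α ∈ C ∧ γ₀ ≤ α ∧ α < κ} κ ∧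
      UnboundedBelow {α | α ∈ C ∧ γ₀ ≤ α ∧ α < κ} κ := by
  constructor
  · intro δ hδ hδlim happ
    have hδC : δ ∈ C := by
      apply hC.1 δ hδ hδlim
      intro β hβ
      obtain ⟨γ, hγ, h1, h2⟩ := happ β hβ
      exact ⟨γ, hγ.1, h1, h2⟩
    obtain ⟨γ, hγ, _, h2⟩ := happ 0 hδlim.pos
    exact ⟨hδC, le_trans hγ.2.1 h2.le, hδ⟩
  · intro α hα
    obtain ⟨β, hβ, h1, h2⟩ := hC.2 (max α γ₀) (max_lt hα hγ₀)
    exact ⟨β, ⟨hβ, le_trans (le_max_right _ _) h1, h2⟩, le_trans (le_max_left _ _) h1, h2⟩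

lemma univ_club (hlim : Order.IsSuccLimit κ) :
    ClosedBelow (Set.univ : Set Ordinal) κ ∧ UnboundedBelow (Set.univ : Set Ordinal) κ :=
  ⟨fun _ _ _ _ => trivial, fun α hα => ⟨α, trivial, le_rfl, hα⟩⟩

lemma stationary_restrict (hlim : Order.IsSuccLimit κ) {W : Set Ordinal}
    (hW : StationaryBelow W κ) {γ₀ : Ordinal} (hγ₀ : γ₀ < κ) :
    StationaryBelow {α | α ∈ W ∧ γ₀ ≤ α ∧ α < κ} κ := by
  intro D hDc hDu
  obtain ⟨α, hαW, hαD, h1, h2⟩ := hW _ (tail_restrict_club hlim ⟨hDc, hDu⟩ hγ₀).1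
    (tail_restrict_club hlim ⟨hDc, hDu⟩ hγ₀).2
  exact ⟨α, ⟨hαW, h1, h2⟩, hαD⟩

lemma stationary_unbounded (hlim : Order.IsSuccLimit κ) {W : Set Ordinal}
    (hW : StationaryBelow W κ) : ∀ α < κ, ∃ β ∈ W, α ≤ β ∧ β < κ := by
  intro α hα
  obtain ⟨β, hβW, _, h1, h2⟩ := hW _ (tail_restrict_club hlim (univ_club hlim) hα).1
    (tail_restrict_club hlim (univ_club hlim) hα).2
  exact ⟨β, hβW, h1, h2⟩

lemma sSup_eq_of_unbounded (hlim : Order.IsSuccLimit κ) {W : Set Ordinal}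
    (hlt : ∀ α ∈ W, α < κ) (hub : ∀ β < κ, ∃ α ∈ W, β ≤ α) : sSup W = κ := by
  have hbdd : BddAbove W := ⟨κ, fun x hx => (hlt x hx).le⟩
  apply le_antisymm
  · exact csSup_le' fun x hx => (hlt x hx).le
  · apply le_of_forall_lt
    intro γ hγ
    obtain ⟨α, hα, hγα⟩ := hub (γ + 1) (hlim.succ_lt hγ)
    exact lt_of_lt_of_le (lt_of_lt_of_le (Order.lt_succ γ) hγα) (le_csSup hbdd hα)

/-- The diagonal intersection of clubs is a club. -/
lemma diag_club (hreg : c.IsRegular) (hunc : Cardinal.aleph0 < c)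
    (D : Ordinal → Set Ordinal)
    (hD : ∀ γ, ClosedBelow (D γ) c.ord ∧ UnboundedBelow (D γ) c.ord) :
    ClosedBelow {α | ∀ γ < α, α ∈ D γ} c.ord ∧
      UnboundedBelow {α | ∀ γ < α, α ∈ D γ} c.ord := by
  have hlim : Order.IsSuccLimit c.ord := Cardinal.isSuccLimit_ord hreg.aleph0_le
  constructor
  · intro δ hδ hδlim happ γ hγδ
    apply (hD γ).1 δ hδ hδlim
    intro β hβ
    obtain ⟨x, hxΔ, hx1, hx2⟩ := happ (max β (γ + 1)) (max_lt hβ (hδlim.succ_lt hγδ))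
    exact ⟨x, hxΔ γ (lt_of_lt_of_le (Order.lt_succ γ) (le_trans (le_max_right _ _) hx1)),
      le_trans (le_max_left _ _) hx1, hx2⟩
  · intro β hβ
    have step : ∀ x, ∃ y, x < y ∧ (x < c.ord → y < c.ord ∧
        ∀ γ < x, ∃ d ∈ D γ, x ≤ d ∧ d < y) := by
      intro x
      by_cases hx : x < c.ord
      · choose d hd1 hd2 hd3 using fun (γ : Ordinal) (h : γ < x) => (hD γ).2 x hx
        refine ⟨max (x + 1) (Ordinal.bsup x d + 1), lt_max_of_lt_left (Order.lt_succ x),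
          fun _ => ⟨?_, ?_⟩⟩
        · apply max_lt (hlim.succ_lt hx)
          exact hlim.succ_lt (Cardinal.bsup_lt_ord_of_isRegular hreg
            (Cardinal.lt_ord.mp hx) (fun i hi => hd3 i hi))
        · intro γ hγ
          refine ⟨d γ hγ, hd1 γ hγ, hd2 γ hγ, ?_⟩
          exact lt_max_of_lt_right (lt_of_le_of_lt (Ordinal.le_bsup d γ hγ)
            (Order.lt_succ _))
      · exact ⟨x + 1, Order.lt_succ x, fun h => absurd h hx⟩
    choose nxt hlt hgood using step
    set f : ℕ → Ordinal := fun n => nxt^[n] (β + 1) with hf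
    have hstep : ∀ n, f (n + 1) = nxt (f n) := fun n => Function.iterate_succ_apply' _ _ _
    have hmono : StrictMono f := strictMono_nat_of_lt_succ (fun n => by
      rw [hstep]; exact hlt _)
    have hfκ : ∀ n, f n < c.ord := by
      intro n
      induction n with
      | zero => exact hlim.succ_lt hβ
      | succ n ih => rw [hstep]; exact (hgood _ ih).1
    set δ := ⨆ n, f n with hδ
    have hf_le : ∀ n, f n ≤ δ := Ordinal.le_iSup f
    have hδκ : δ < c.ord := by
      rw [hδ]
      apply Ordinal.iSup_lt_ord_lift _ hfκ
      rw [Cardinal.mk_nat, Cardinal.lift_aleph0, hreg.cof_eq]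
      exact hunc
    have hβ1 : β < β + 1 := by
      rw [Ordinal.add_one_eq_succ]; exact Order.lt_succ β
    have hlt_iff : ∀ a, a < δ → ∃ n, a < f n := fun a ha => Ordinal.lt_iSup_iff.mp ha
    have hδlim : Order.IsSuccLimit δ := by
      refine Ordinal.isSuccLimit_iff.mpr ⟨?_, Order.isSuccPrelimit_of_succ_lt ?_⟩
      · rw [← pos_iff_ne_zero]
        exact lt_of_lt_of_le (lt_of_le_of_lt (zero_le (a := β)) hβ1) (hf_le 0)
      · intro a ha
        obtain ⟨n, hn⟩ := hlt_iff a ha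
        exact lt_of_le_of_lt (Order.succ_le_of_lt hn)
          (lt_of_lt_of_le (hmono (Nat.lt_succ_self n)) (hf_le (n + 1)))
    refine ⟨δ, ?_, le_trans hβ1.le (hf_le 0), hδκ⟩
    intro γ hγδ
    apply (hD γ).1 δ hδκ hδlim
    intro b hb
    obtain ⟨n, hn⟩ := hlt_iff γ hγδ
    obtain ⟨m, hm⟩ := hlt_iff b hb
    have hγk : γ < f (max n m) := lt_of_lt_of_le hn (hmono.monotone (le_max_left _ _))
    obtain ⟨d, hdD, hd1, hd2⟩ := (hgood _ (hfκ (max n m))).2 γ hγk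
    refine ⟨d, hdD, ?_, ?_⟩
    · exact le_trans (lt_of_lt_of_le hm (hmono.monotone (le_max_right _ _))).le hd1
    · rw [← hstep] at hd2
      exact lt_of_lt_of_le hd2 (hf_le _)

/-- Fodor's lemma for these bespoke notions. -/
lemma fodor (hreg : c.IsRegular) (hunc : Cardinal.aleph0 < c) {W : Set Ordinal}
    (hW : StationaryBelow W c.ord) (f : Ordinal → Ordinal) (hf : ∀ α ∈ W, f α < α) :
    ∃ γ, StationaryBelow {α | α ∈ W ∧ f α = γ} c.ord := by
  by_contra hcon
  push_neg at hcon
  have h' : ∀ γ, ∃ D, ClosedBelow D c.ord ∧ UnboundedBelow D c.ord ∧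
      ({α | α ∈ W ∧ f α = γ} ∩ D) = ∅ := by
    intro γ
    have := hcon γ
    unfold StationaryBelow at this
    push_neg at this
    obtain ⟨D, h1, h2, h3⟩ := this
    exact ⟨D, h1, h2, h3⟩
  choose D hC hU hE using h'
  obtain ⟨α, hαW, hαΔ⟩ := hW _ (diag_club hreg hunc D (fun γ => ⟨hC γ, hU γ⟩)).1
    (diag_club hreg hunc D (fun γ => ⟨hC γ, hU γ⟩)).2
  have hfα : f α < α := hf α hαW
  have : α ∈ {β | β ∈ W ∧ f β = f α} ∩ D (f α) := ⟨⟨hαW, rfl⟩, hαΔ (f α) hfα⟩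
  rw [hE (f α)] at this
  exact this

/-- A `ℕ`-valued function on a stationary set has a stationary fiber. -/
lemma nat_fiber (hreg : c.IsRegular) (hunc : Cardinal.aleph0 < c) {W : Set Ordinal}
    (hW : StationaryBelow W c.ord) (h : Ordinal → ℕ) :
    ∃ n, StationaryBelow {α | α ∈ W ∧ h α = n} c.ord := by
  have hlim : Order.IsSuccLimit c.ord := Cardinal.isSuccLimit_ord hreg.aleph0_le
  by_contra hcon
  push_neg at hcon
  have h' : ∀ n, ∃ D, ClosedBelow D c.ord ∧ UnboundedBelow D c.ord ∧
      ({α | α ∈ W ∧ h α = n} ∩ D) = ∅ := by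
    intro n
    have := hcon n
    unfold StationaryBelow at this
    push_neg at this
    obtain ⟨D, h1, h2, h3⟩ := this
    exact ⟨D, h1, h2, h3⟩
  choose D hC hU hE using h'
  classical
  set D' : Ordinal → Set Ordinal :=
    fun γ => if hg : ∃ n : ℕ, (n : Ordinal) = γ then D hg.choose else Set.univ with hD'def
  have hD' : ∀ γ, ClosedBelow (D' γ) c.ord ∧ UnboundedBelow (D' γ) c.ord := by
    intro γ
    rw [hD'def]
    by_cases hg : ∃ n : ℕ, (n : Ordinal) = γ
    · simp only [dif_pos hg]; exact ⟨hC _, hU _⟩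
    · simp only [dif_neg hg]; exact univ_club hlim
  have hΔ := diag_club hreg hunc D' hD'
  have hclub := tail_restrict_club hlim hΔ (omega0_lt_ord hreg hunc)
  obtain ⟨α, hαW, hαΔ, hωα, _⟩ := hW _ hclub.1 hclub.2
  set n := h α with hn
  have hnα : ((n : ℕ) : Ordinal) < α := lt_of_lt_of_le (Ordinal.nat_lt_omega0 n) hωα
  have hα' : α ∈ D' (n : Ordinal) := hαΔ _ hnα
  have hg : ∃ m : ℕ, (m : Ordinal) = ((n : ℕ) : Ordinal) := ⟨n, rfl⟩
  rw [hD'def] at hα'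
  simp only [dif_pos hg] at hα'
  have hgn : hg.choose = n := Nat.cast_injective hg.choose_spec
  rw [hgn] at hα'
  have : α ∈ {β | β ∈ W ∧ h β = n} ∩ D n := ⟨⟨hαW, rfl⟩, hα'⟩
  rw [hE n] at this
  exact this


variable {lam : Ordinal} {S T : Set Seq}

instance : IsTrans Ordinal (fun a b : Ordinal => a > b) :=
  ⟨fun _ _ _ h1 h2 => lt_trans h2 h1⟩

lemma sub_trans {A B C : Set Seq} (h1 : SubLambdaSet A B) (h2 : SubLambdaSet B C) :
    SubLambdaSet A C :=
  ⟨h1.1.trans h2.1, fun η hη => (h1.2 η hη).trans (h2.2 η (h1.1 hη))⟩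

lemma nil_mem (hS : IsLambdaSet lam S) : [] ∈ S := by
  obtain ⟨η, hη⟩ := hS.1
  exact hS.2.2.2.1 η hη [] List.nil_prefix

lemma pairwise_of_mem (hS : IsLambdaSet lam S) {η : Seq} (hη : η ∈ S) :
    List.Pairwise (fun a b : Ordinal => a > b) η :=
  List.isChain_iff_pairwise.mp (hS.2.1 η hη)

lemma regunc_isLimit {κ : Ordinal} (h : IsRegUncountable κ) : Order.IsSuccLimit κ := by
  obtain ⟨c, hreg, _, rfl⟩ := h
  exact Cardinal.isSuccLimit_ord hreg.aleph0_le

lemma stationary_sSup {κ : Ordinal} (h : IsRegUncountable κ) {W : Set Ordinal}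
    (hW : StationaryBelow W κ) (hsub : ∀ α ∈ W, α < κ) : sSup W = κ := by
  have hlim := regunc_isLimit h
  apply sSup_eq_of_unbounded hlim hsub
  intro β hβ
  obtain ⟨α, hα, h1, _⟩ := stationary_unbounded hlim hW β hβ
  exact ⟨α, hα, h1⟩

lemma Wset_cons (S : Set Seq) (α : Ordinal) (ν : Seq) :
    Wset {ν' | α :: ν' ∈ S} ν = Wset S (α :: ν) := by
  ext i; simp [Wset]

/-- Pruning: get a sub-λ-set in which every direct extension is below `lamOf`. -/
lemma prune (lam : Ordinal) (S : Set Seq) (hS : IsLambdaSet lam S) :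
    ∃ T, IsLambdaSet lam T ∧ SubLambdaSet T S ∧
      ∀ η i, η ++ [i] ∈ T → i < lamOf T η := by
  set T : Set Seq := {η | η ∈ S ∧ ∀ ρ i, ρ ++ [i] <+: η → i < lamOf S ρ} with hTdef
  have hTsub : T ⊆ S := fun η hη => hη.1
  have hTpre : ∀ η ∈ T, ∀ ν : Seq, ν <+: η → ν ∈ T := by
    intro η hη ν hpre
    exact ⟨hS.2.2.2.1 η hη.1 ν hpre, fun ρ i h => hη.2 ρ i (h.trans hpre)⟩
  have hnilT : [] ∈ T := by
    refine ⟨nil_mem hS, fun ρ i h => ?_⟩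
    have := List.prefix_nil.mp h
    simp at this
  have hWT : ∀ η ∈ T, Wset T η =
      {α | α ∈ Wset S η ∧ (0 : Ordinal) ≤ α ∧ α < lamOf S η} := by
    intro η hη
    ext i
    constructor
    · intro hi
      exact ⟨hi.1, zero_le (a := i), hi.2 η i ⟨[], by simp⟩⟩
    · rintro ⟨h1, -, h2⟩
      refine ⟨h1, fun ρ j hpre => ?_⟩
      rcases List.prefix_concat_iff.mp hpre with heq | hpre'
      · obtain ⟨hρη, hji⟩ := List.append_inj' heq rfl
        obtain rfl : j = i := by simpa using hji
        rw [hρη]; exact h2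
      · exact hη.2 ρ j hpre'
  have hlamT : ∀ η ∈ T, lamOf T η = lamOf S η := by
    intro η hη
    by_cases hne : (Wset S η).Nonempty
    · obtain ⟨hreg, hstat⟩ := hS.2.2.2.2.1 η (hTsub hη) hne
      have hlim := regunc_isLimit hreg
      rw [lamOf, hWT η hη]
      exact stationary_sSup hreg (stationary_restrict hlim hstat hlim.pos)
        (fun α hα => hα.2.2)
    · have hempty : Wset S η = ∅ := Set.not_nonempty_iff_eq_empty.mp hne
      have : Wset T η = ∅ := by
        rw [hWT η hη, hempty]; ext i; simp
      rw [lamOf, lamOf, this, hempty]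
  refine ⟨T, ⟨⟨[], hnilT⟩, ?_, ?_, hTpre, ?_, ?_⟩, ⟨hTsub, hlamT⟩, ?_⟩
  · exact fun η hη => hS.2.1 η (hTsub hη)
  · exact fun η hη => hS.2.2.1 η (hTsub hη)
  · intro η hη hne
    have hneS : (Wset S η).Nonempty := by
      obtain ⟨i, hi⟩ := hne
      exact ⟨i, hi.1⟩
    obtain ⟨hreg, hstat⟩ := hS.2.2.2.2.1 η (hTsub hη) hneS
    have hlim := regunc_isLimit hreg
    constructor
    · rw [hlamT η hη]; exact hreg
    · rw [hlamT η hη, hWT η hη]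
      exact stationary_restrict hlim hstat hlim.pos
  · rw [hlamT [] hnilT]; exact hS.2.2.2.2.2
  · intro η i hmem
    have hηT : η ∈ T := hTpre _ hmem η (List.prefix_append η [i])
    rw [hlamT η hηT]
    exact hmem.2 η i ⟨[], by simp⟩

/-- In a pruned λ-set, `lamOf` at a one-step extension is at most the new entry. -/
lemma lamOf_concat_le (hS : IsLambdaSet lam T) {μ : Seq} {j : Ordinal}
    (h : μ ++ [j] ∈ T) : lamOf T (μ ++ [j]) ≤ j := by
  apply csSup_le'
  intro i hi
  have hmem : (μ ++ [j]) ++ [i] ∈ T := hi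
  have hpw := pairwise_of_mem hS hmem
  rw [List.append_assoc] at hpw
  have hp := (List.pairwise_append.mp hpw).2.1
  rw [List.singleton_append] at hp
  exact ((List.pairwise_cons.mp hp).1 i (by simp)).le

lemma lamOf_append_le (hS : IsLambdaSet lam T)
    (hP : ∀ η i, η ++ [i] ∈ T → i < lamOf T η) :
    ∀ ν ρ : Seq, ρ ++ ν ∈ T → lamOf T (ρ ++ ν) ≤ lamOf T ρ := by
  intro ν
  induction ν using List.reverseRecOn with
  | nil => intro ρ h; simp
  | append_singleton ν' j ih =>
    intro ρ h
    rw [← List.append_assoc] at h ⊢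
    have h1 : lamOf T ((ρ ++ ν') ++ [j]) ≤ j := lamOf_concat_le hS h
    have h2 : j < lamOf T (ρ ++ ν') := hP (ρ ++ ν') j h
    have h3 : ρ ++ ν' ∈ T := hS.2.2.2.1 _ h _ (List.prefix_append _ _)
    exact le_trans (le_of_lt (lt_of_le_of_lt h1 h2)) (ih ρ h3)

lemma entry_lt (hS : IsLambdaSet lam T)
    (hP : ∀ η i, η ++ [i] ∈ T → i < lamOf T η)
    {α : Ordinal} {ν : Seq} (h : α :: ν ∈ T) {i : Ordinal} (hi : i ∈ ν) :
    i < lamOf T [α] := by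
  obtain ⟨s, t, rfl⟩ := List.append_of_mem hi
  have hpre : (α :: s) ++ [i] <+: α :: (s ++ i :: t) := ⟨t, by simp⟩
  have hm : (α :: s) ++ [i] ∈ T := hS.2.2.2.1 _ h _ hpre
  have h1 : i < lamOf T (α :: s) := hP _ _ hm
  have h2 : lamOf T (α :: s) ≤ lamOf T [α] := by
    have hcons : α :: s ∈ T := hS.2.2.2.1 _ hm _ ⟨[i], by simp⟩
    exact lamOf_append_le hS hP s [α] hcons
  exact lt_of_lt_of_le h1 h2


lemma main_lemma : ∀ (lam : Ordinal) (S : Set Seq), IsLambdaSet lam S →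
    ∀ F : Seq → Ordinal, (∀ (η : Seq) (α : Ordinal), η ++ [α] ∈ S → F (η ++ [α]) < 1 + α) →
    ∃ (S1 : Set Seq) (g : ℕ → Ordinal) (n : ℕ), IsLambdaSet lam S1 ∧ SubLambdaSet S1 S ∧
      (∀ η ∈ S1, η.length ≤ n) ∧ ∀ η ∈ S1, η ≠ [] → F η = g η.length := by
  intro lam
  induction lam using Ordinal.induction with
  | h lam IH =>
  intro S hS F hF
  classical
  obtain ⟨T, hT, hTS, hP⟩ := prune lam S hS
  have hFT : ∀ (η : Seq) (α : Ordinal), η ++ [α] ∈ T → F (η ++ [α]) < 1 + α :=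
    fun η α h => hF η α (hTS.1 h)
  suffices h : ∃ (S1 : Set Seq) (g : ℕ → Ordinal) (n : ℕ),
      IsLambdaSet lam S1 ∧ SubLambdaSet S1 T ∧
      (∀ η ∈ S1, η.length ≤ n) ∧ ∀ η ∈ S1, η ≠ [] → F η = g η.length by
    obtain ⟨S1, g, n, h1, h2, h3, h4⟩ := h
    exact ⟨S1, g, n, h1, sub_trans h2 hTS, h3, h4⟩
  by_cases hW0 : (Wset T []).Nonempty
  swap
  · -- T = {[]}
    have hTnil : ∀ η ∈ T, η = [] := by
      intro η hη
      match η, hη with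
      | [], _ => rfl
      | (a :: t), hη =>
        exfalso
        apply hW0
        refine ⟨a, ?_⟩
        have : [a] ∈ T := hT.2.2.2.1 _ hη [a] (by exact ⟨t, rfl⟩)
        simpa [Wset] using this
    refine ⟨T, fun _ => 0, 0, hT, ⟨subset_rfl, fun _ _ => rfl⟩, ?_, ?_⟩
    · intro η hη; rw [hTnil η hη]; simp
    · intro η hη hne; exact absurd (hTnil η hη) hne
  · obtain ⟨hru, hstatW⟩ := hT.2.2.2.2.1 [] (nil_mem hT) hW0
    obtain ⟨c, hcreg, hcunc, hord⟩ := hru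
    have hlam : lam = c.ord := by rw [← hT.2.2.2.2.2]; exact hord
    have hstatW' : StationaryBelow (Wset T []) c.ord := by rwa [hord] at hstatW
    have hlimord : Order.IsSuccLimit c.ord := Cardinal.isSuccLimit_ord hcreg.aleph0_le
    set W0 := {α | α ∈ Wset T [] ∧ Ordinal.omega0 ≤ α ∧ α < c.ord} with hW0def
    have hstat0 : StationaryBelow W0 c.ord :=
      stationary_restrict hlimord hstatW' (omega0_lt_ord hcreg hcunc)
    -- per-α data from the inductive hypothesis
    have key : ∀ α : Ordinal, ∃ (T1 : Set Seq) (g : ℕ → Ordinal) (n : ℕ), α ∈ W0 →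
        IsLambdaSet (lamOf T [α]) T1 ∧ (T1 ⊆ {ν | α :: ν ∈ T}) ∧
        (∀ ν ∈ T1, lamOf T1 ν = lamOf T (α :: ν)) ∧
        (∀ ν ∈ T1, ν.length ≤ n) ∧
        (∀ ν ∈ T1, ν ≠ [] → F (α :: ν) = g ν.length) ∧
        (∀ k, 1 ≤ k → g k < α) := by
      intro α
      by_cases hα : α ∈ W0
      swap
      · exact ⟨∅, fun _ => 0, 0, fun h => absurd h hα⟩
      obtain ⟨hαW, hωα, hακ⟩ := hα
      set Sα := {ν | α :: ν ∈ T} with hSαdef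
      have hmemα : [α] ∈ T := by simpa [Wset] using hαW
      set κα := lamOf T [α] with hκα
      have hκα_le : κα ≤ α := by
        apply csSup_le'
        intro j hj
        have hmem : [α] ++ [j] ∈ T := hj
        have hpw := pairwise_of_mem hT hmem
        exact ((List.pairwise_cons.mp hpw).1 j (by simp)).le
      have hκα_lt : κα < lam := by
        rw [hlam]; exact lt_of_le_of_lt hκα_le hακ
      have hWcons : ∀ ν : Seq, Wset Sα ν = Wset T (α :: ν) := Wset_cons T α
      have hlamcons : ∀ ν : Seq, lamOf Sα ν = lamOf T (α :: ν) :=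
        fun ν => congrArg sSup (hWcons ν)
      have hSα : IsLambdaSet κα Sα := by
        refine ⟨⟨[], by simpa [hSαdef] using hmemα⟩, ?_, ?_, ?_, ?_, ?_⟩
        · intro ν hν
          have hpw := pairwise_of_mem hT (show α :: ν ∈ T from hν)
          exact List.isChain_iff_pairwise.mpr (List.Pairwise.of_cons hpw)
        · intro ν hν i hi
          exact entry_lt hT hP (show α :: ν ∈ T from hν) hi
        · intro ν hν ρ hρ
          exact hT.2.2.2.1 _ (show α :: ν ∈ T from hν) _ (List.cons_prefix_cons.mpr ⟨rfl, hρ⟩)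
        · intro ν hν hne
          rw [hlamcons ν, hWcons ν]
          apply hT.2.2.2.2.1 (α :: ν) (show α :: ν ∈ T from hν)
          rwa [hWcons ν] at hne
        · exact hlamcons []
      have hFα : ∀ (η : Seq) (β : Ordinal), η ++ [β] ∈ Sα →
          (fun ν => F (α :: ν)) (η ++ [β]) < 1 + β := by
        intro η β hmem
        have : (α :: η) ++ [β] ∈ T := by simpa using (show α :: (η ++ [β]) ∈ T from hmem)
        simpa using hFT (α :: η) β this
      obtain ⟨T1, g0, n, h1, h2, h3, h4⟩ := IH κα hκα_lt Sα hSα (fun ν => F (α :: ν)) hFα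
      set g : ℕ → Ordinal :=
        fun k => if (∃ ν ∈ T1, ν.length = k ∧ ν ≠ []) then g0 k else 0 with hgdef
      have hval : ∀ ν ∈ T1, ν ≠ [] → F (α :: ν) = g ν.length := by
        intro ν hν hne
        have hex : ∃ ν' ∈ T1, ν'.length = ν.length ∧ ν' ≠ [] := ⟨ν, hν, rfl, hne⟩
        simp only [hgdef]
        rw [if_pos hex]
        exact h4 ν hν hne
      refine ⟨T1, g, n, fun _ => ⟨h1, h2.1, ?_, h3, hval, ?_⟩⟩
      · intro ν hν
        rw [h2.2 ν hν]; exact hlamcons ν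
      · intro k hk
        rw [hgdef]
        by_cases hex : ∃ ν ∈ T1, ν.length = k ∧ ν ≠ []
        · simp only [if_pos hex]
          obtain ⟨ν, hν, hlen, hne⟩ := hex
          have hvv : F (α :: ν) = g0 k := hlen ▸ h4 ν hν hne
          have hmm : α :: ν ∈ T := h2.1 hν
          have hνne : (α :: ν : Seq) ≠ [] := List.cons_ne_nil α ν
          have hsplit : (α :: ν).dropLast ++ [(α :: ν).getLast hνne] = α :: ν :=
            List.dropLast_append_getLast hνne
          have hmemS : (α :: ν).dropLast ++ [(α :: ν).getLast hνne] ∈ S := by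
            rw [hsplit]; exact hTS.1 hmm
          have hFlt := hF _ _ hmemS
          rw [hsplit] at hFlt
          have hlast_mem : (α :: ν).getLast hνne ∈ ν := by
            rw [List.getLast_cons hne]
            exact List.getLast_mem hne
          have hlast_lt : (α :: ν).getLast hνne < α :=
            (List.pairwise_cons.mp (pairwise_of_mem hT hmm)).1 _ hlast_mem
          have h1α : 1 + (α :: ν).getLast hνne ≤ α := by
            have h' : 1 + (α :: ν).getLast hνne < 1 + α := by
              exact (add_lt_add_iff_left 1).mpr hlast_lt
            rw [Ordinal.one_add_of_omega0_le hωα] at h'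
            exact h'.le
          rw [← hvv]
          exact lt_of_lt_of_le hFlt h1α
        · simp only [if_neg hex]
          exact lt_of_lt_of_le Ordinal.omega0_pos hωα
    choose T1 gg nn hkey using key
    -- stabilize the height
    obtain ⟨N, hstatN⟩ := nat_fiber hcreg hcunc hstat0 nn
    set W1 := {α | α ∈ W0 ∧ nn α = N} with hW1def
    -- press the first-level value
    have hf1 : ∀ α ∈ W1, F [α] < α := by
      intro α hα
      have hmem : ([] : Seq) ++ [α] ∈ S := by
        simpa using hTS.1 (show ([α] : Seq) ∈ T by simpa [Wset] using hα.1.1)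
      have := hF [] α hmem
      simp only [List.nil_append] at this
      rwa [Ordinal.one_add_of_omega0_le hα.1.2.1] at this
    obtain ⟨c0, hstatc0⟩ := fodor hcreg hcunc hstatN (fun α => F [α]) hf1
    set W2 := {α | α ∈ W1 ∧ F [α] = c0} with hW2def
    -- press levels 1..N of the subtree constants
    have press : ∀ k : ℕ, ∃ (W' : Set Ordinal) (cs : ℕ → Ordinal),
        StationaryBelow W' c.ord ∧ W' ⊆ W2 ∧
        ∀ α ∈ W', ∀ j, 1 ≤ j → j ≤ k → gg α j = cs j := by
      intro k
      induction k with
      | zero => exact ⟨W2, fun _ => 0, hstatc0, subset_rfl, fun α _ j h1 h2 => by omega⟩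
      | succ k ihk =>
        obtain ⟨W', cs, hst, hsub, hconst⟩ := ihk
        have hreg' : ∀ α ∈ W', gg α (k + 1) < α := by
          intro α hα
          exact (hkey α (hsub hα).1.1).2.2.2.2.2 (k + 1) (by omega)
        obtain ⟨ck, hstk⟩ := fodor hcreg hcunc hst (fun α => gg α (k + 1)) hreg'
        refine ⟨{α | α ∈ W' ∧ gg α (k + 1) = ck}, Function.update cs (k + 1) ck, hstk,
          fun α hα => hsub hα.1, ?_⟩
        intro α hα j h1j hjk1
        by_cases hj : j = k + 1
        · subst hj; rw [Function.update_self]; exact hα.2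
        · rw [Function.update_of_ne hj]; exact hconst α hα.1 j h1j (by omega)
    obtain ⟨Wst, cs, hstatWst, hWstsub, hcs⟩ := press N
    have hWstW0 : Wst ⊆ W0 := fun α hα => (hWstsub hα).1.1
    -- the new λ-set
    set S1 : Set Seq := {η | η = [] ∨ ∃ α ∈ Wst, ∃ ν ∈ T1 α, η = α :: ν} with hS1def
    set gT : ℕ → Ordinal := fun k => if k = 1 then c0 else cs (k - 1) with hgTdef
    have hkdat : ∀ α ∈ Wst, IsLambdaSet (lamOf T [α]) (T1 α) ∧
        (T1 α ⊆ {ν | α :: ν ∈ T}) ∧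
        (∀ ν ∈ T1 α, lamOf (T1 α) ν = lamOf T (α :: ν)) ∧
        (∀ ν ∈ T1 α, ν.length ≤ nn α) ∧
        (∀ ν ∈ T1 α, ν ≠ [] → F (α :: ν) = gg α ν.length) ∧
        (∀ k, 1 ≤ k → gg α k < α) := fun α hα => hkey α (hWstW0 hα)
    have hmemT : ∀ α ∈ Wst, ∀ ν ∈ T1 α, α :: ν ∈ T :=
      fun α hα ν hν => (hkdat α hα).2.1 hν
    have hWnil : Wset S1 [] = Wst := by
      ext i
      simp only [Wset, hS1def, List.nil_append, Set.mem_setOf_eq]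
      constructor
      · rintro (h | ⟨α, hα, ν, hν, heq⟩)
        · exact absurd h (by simp)
        · obtain ⟨h1, h2⟩ := List.cons_eq_cons.mp heq
          subst h1; exact hα
      · intro hi
        exact Or.inr ⟨i, hi, [], nil_mem (hkdat i hi).1, rfl⟩
    have hWstlt : ∀ α ∈ Wst, α < c.ord := fun α hα => (hWstW0 hα).2.2
    have hsupWst : sSup Wst = c.ord :=
      stationary_sSup ⟨c, hcreg, hcunc, rfl⟩ hstatWst hWstlt
    have hlamnil : lamOf S1 [] = lam := by
      rw [lamOf, hWnil, hsupWst, hlam]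
    have hWcons1 : ∀ α ∈ Wst, ∀ ν ∈ T1 α, Wset S1 (α :: ν) = Wset (T1 α) ν := by
      intro α hα ν hν
      ext i
      simp only [Wset, hS1def, Set.mem_setOf_eq, List.cons_append]
      constructor
      · rintro (h | ⟨α', hα', ν', hν', heq⟩)
        · exact absurd h (by simp)
        · obtain ⟨h1, h2⟩ := List.cons_eq_cons.mp heq
          subst h1; rw [h2]; exact hν'
      · intro hi
        exact Or.inr ⟨α, hα, ν ++ [i], hi, rfl⟩
    have hlamcons1 : ∀ α ∈ Wst, ∀ ν ∈ T1 α, lamOf S1 (α :: ν) = lamOf (T1 α) ν :=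
      fun α hα ν hν => congrArg sSup (hWcons1 α hα ν hν)
    have hS1subT : S1 ⊆ T := by
      rintro η (rfl | ⟨α, hα, ν, hν, rfl⟩)
      · exact nil_mem hT
      · exact hmemT α hα ν hν
    have hpre1 : ∀ η ∈ S1, ∀ ρ : Seq, ρ <+: η → ρ ∈ S1 := by
      rintro η (rfl | ⟨α, hα, ν, hν, rfl⟩) ρ hρ
      · rw [List.prefix_nil.mp hρ]; exact Or.inl rfl
      · match ρ, hρ with
        | [], _ => exact Or.inl rfl
        | (b :: ρ'), hρ =>
          obtain ⟨hb, hρ'⟩ := List.cons_prefix_cons.mp hρ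
          subst hb
          exact Or.inr ⟨b, hα, ρ', (hkdat b hα).1.2.2.2.1 ν hν ρ' hρ', rfl⟩
    have hlamS1 : ∀ η ∈ S1, lamOf S1 η = lamOf T η := by
      rintro η (rfl | ⟨α, hα, ν, hν, rfl⟩)
      · rw [hlamnil, hT.2.2.2.2.2]
      · rw [hlamcons1 α hα ν hν, (hkdat α hα).2.2.1 ν hν]
    refine ⟨S1, gT, N + 1, ⟨⟨[], Or.inl rfl⟩, ?_, ?_, hpre1, ?_, hlamnil⟩,
      ⟨hS1subT, hlamS1⟩, ?_, ?_⟩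
    · exact fun η hη => hT.2.1 η (hS1subT hη)
    · exact fun η hη => hT.2.2.1 η (hS1subT hη)
    · -- clause 5
      rintro η (rfl | ⟨α, hα, ν, hν, rfl⟩) hne
      · constructor
        · rw [hlamnil, hlam]; exact ⟨c, hcreg, hcunc, rfl⟩
        · rw [hWnil, hlamnil, hlam]; exact hstatWst
      · have hWeq := hWcons1 α hα ν hν
        have hlamEq := hlamcons1 α hα ν hν
        have hne' : (Wset (T1 α) ν).Nonempty := by rwa [hWeq] at hne
        obtain ⟨hr, hs⟩ := (hkdat α hα).1.2.2.2.2.1 ν hν hne'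
        constructor
        · rw [hlamEq]; exact hr
        · rw [hWeq, hlamEq]; exact hs
    · -- lengths
      rintro η (rfl | ⟨α, hα, ν, hν, rfl⟩)
      · simp
      · have h1 : ν.length ≤ nn α := (hkdat α hα).2.2.2.1 ν hν
        have h2 : nn α = N := (hWstsub hα).1.2
        simp only [List.length_cons]
        omega
    · -- values
      rintro η (rfl | ⟨α, hα, ν, hν, rfl⟩) hne
      · exact absurd rfl hne
      · by_cases hν0 : ν = []
        · subst hν0
          have : F [α] = c0 := (hWstsub hα).2
          simpa [hgTdef] using this
        · have hval : F (α :: ν) = gg α ν.length := (hkdat α hα).2.2.2.2.1 ν hν hν0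
          have hlen1 : 1 ≤ ν.length := List.length_pos_iff.mpr hν0
          have hlenN : ν.length ≤ N := by
            have := (hkdat α hα).2.2.2.1 ν hν
            have h2 : nn α = N := (hWstsub hα).1.2
            omega
          have hceq : gg α ν.length = cs ν.length := hcs α hα ν.length hlen1 hlenN
          rw [hval, hceq]
          have : (α :: ν).length = ν.length + 1 := List.length_cons
          rw [this, hgTdef]
          simp only [Nat.add_sub_cancel]
          rw [if_neg (by omega)]

/-- Claim 3.2(5). If `S` is a `λ`-set and `F` satisfies
`F(η⌢⟨α⟩) < 1 + α` for all `η⌢⟨α⟩ ∈ S`, then `F` is essentially constant on some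
sub-`λ`-set `S¹ ≤ S`: constant on the nonempty elements of each fixed length. -/
theorem essentially_constant_on_sub_lambdaSet (lam : Ordinal) (S : Set Seq)
    (hS : IsLambdaSet lam S) (F : Seq → Ordinal)
    (hF : ∀ (η : Seq) (α : Ordinal), η ++ [α] ∈ S → F (η ++ [α]) < 1 + α) :
    ∃ S1 : Set Seq, IsLambdaSet lam S1 ∧ SubLambdaSet S1 S ∧
      ∀ m : ℕ, ∀ η ∈ S1, ∀ ν ∈ S1, η ≠ [] → ν ≠ [] →
        η.length = m → ν.length = m → F η = F ν := by
  obtain ⟨S1, g, n, h1, h2, _, h4⟩ := main_lemma lam S hS F hF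
  refine ⟨S1, h1, h2, ?_⟩
  intro m η hη ν hν hη0 hν0 hlη hlν
  rw [h4 η hη hη0, h4 ν hν hν0, hlη, hlν]

end Sh521
end

section
/- Suppose λ is a regular uncountable cardinal, ⟨B_η : η ∈ S_c⟩ is a λ-system, and for each η ∈ S_f, s_η is a nonempty subset of ⋃_{ℓ < length(η)} B_{η↾(ℓ+1)}. Then the indexed family { s_η : η ∈ S_f } has no transversal (no injective choice function η ↦ x_η with x_η ∈ s_η). -/
open Set

namespace Sh521

universe u

open Order in
theorem aux {α : Type u} : ∀ (lam : Cardinal.{u}),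
    lam.IsRegular → Cardinal.aleph0 < lam →
    ∀ (S : Set Seq.{u}),
    ([] : Seq) ∈ S →
    (∀ η ∈ S, List.Chain' (fun a b => a > b) η) →
    (∀ η ∈ S, (Wset S η).Nonempty →
      IsRegUncountable (lamOf S η) ∧ StationaryBelow (Wset S η) (lamOf S η)) →
    lamOf S [] = lam.ord →
    ∀ (B : Seq → Set α),
    (∀ η ∈ Si S, ∀ i j : Ordinal, i < j → j < lamOf S η →
      B (η ++ [i]) ⊆ B (η ++ [j])) →
    (∀ η ∈ Si S, ∀ δ : Ordinal, δ < lamOf S η → Order.IsSuccLimit δ →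
      B (η ++ [δ]) = ⋃ i ∈ Iio δ, B (η ++ [i])) →
    (∀ η ∈ Si S, ∀ i : Ordinal, i < lamOf S η →
      Cardinal.mk ↥(B (η ++ [i])) < (lamOf S η).card) →
    ∀ (s : Seq → Set α) (g : Seq → α),
    (∀ η ∈ Sf S, g η ∈ s η) →
    Set.InjOn g (Sf S) →
    (∀ η ∈ Sf S, s η ⊆ ⋃ ℓ ∈ Finset.range η.length, B (η.take (ℓ + 1))) →
    False := by
  intro lam
  induction lam using Cardinal.lt_wf.induction with
  | _ lam IH =>
  intro hreg hunc S h0 hchain hstat hlam B hmono hcont hcard s g hg hinj hsub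
  classical
  by_cases hW : (Wset S []).Nonempty
  swap
  · have hf : ([] : Seq) ∈ Sf S := ⟨h0, Set.not_nonempty_iff_eq_empty.mp hW⟩
    have := hsub [] hf (hg [] hf)
    simp at this
  have hSi : ([] : Seq) ∈ Si S := ⟨h0, fun h => hW.ne_empty h.2⟩
  have hWstat := (hstat [] h0 hW).2
  rw [hlam] at hWstat
  have hlimord : Order.IsSuccLimit lam.ord := Cardinal.isSuccLimit_ord hunc.le
  -- Key claim
  have key : ∀ i ∈ Wset S [], i < lam.ord →
      ∃ η, η ∈ Sf S ∧ (∃ t, η = i :: t) ∧ g η ∈ B [i] := by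
    intro i hi hilt
    by_contra hcon
    have hiS : ([i] : Seq) ∈ S := hi
    by_cases hWi : (Wset S [i]).Nonempty
    · obtain ⟨κ, hκreg, hκunc, hκord⟩ := (hstat [i] hiS hWi).1
      have hκlt : κ < lam := by
        have h1 : lamOf S [i] ≤ i := by
          refine csSup_le hWi fun j hj => le_of_lt ?_
          exact (List.isChain_cons_cons.mp (hchain _ hj)).1
        rw [hκord] at h1
        exact Cardinal.ord_lt_ord.mp (lt_of_le_of_lt h1 hilt)
      -- subtree
      refine IH κ hκlt hκreg hκunc {ν | (i :: ν : Seq) ∈ S} hiS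
        (fun ν hν => (hchain _ hν).tail)
        (fun ν hν hne => hstat (i :: ν) hν hne) hκord
        (fun ν => B (i :: ν))
        (fun ν hν => hmono (i :: ν) hν)
        (fun ν hν => hcont (i :: ν) hν)
        (fun ν hν => hcard (i :: ν) hν)
        (fun ν => s (i :: ν) \ B [i]) (fun ν => g (i :: ν))
        (fun ν hν => ⟨hg (i :: ν) hν, fun hmem => hcon ⟨i :: ν, hν, ⟨ν, rfl⟩, hmem⟩⟩)
        (fun ν₁ h₁ ν₂ h₂ he => by
          have := hinj h₁ h₂ he
          injection this) ?_
      intro ν hν x hx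
      have hx2 := hsub (i :: ν) hν hx.1
      simp only [Set.mem_iUnion, Finset.mem_range] at hx2 ⊢
      obtain ⟨ℓ, hℓ, hxB⟩ := hx2
      match ℓ with
      | 0 => exact absurd hxB hx.2
      | (m+1) =>
        refine ⟨m, ?_, hxB⟩
        simpa using hℓ
    · have hf : ([i] : Seq) ∈ Sf S := ⟨hiS, Set.not_nonempty_iff_eq_empty.mp hWi⟩
      have := hsub [i] hf (hg [i] hf)
      simp at this
      exact hcon ⟨[i], hf, ⟨[], rfl⟩, this⟩
  have key' : ∀ i : Ordinal, ∃ e : Seq, i ∈ Wset S [] → i < lam.ord →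
      e ∈ Sf S ∧ (∃ t, e = i :: t) ∧ g e ∈ B [i] := by
    intro i
    by_cases h : i ∈ Wset S [] ∧ i < lam.ord
    · obtain ⟨e, he⟩ := key i h.1 h.2
      exact ⟨e, fun _ _ => he⟩
    · exact ⟨[], fun h1 h2 => absurd ⟨h1, h2⟩ h⟩
  obtain ⟨η, hη⟩ := Classical.skolem.mp key'
  -- the approximate inverse of g ∘ η
  set inv : α → Ordinal := fun x =>
    if h : ∃ i', (i' ∈ Wset S [] ∧ i' < lam.ord) ∧ g (η i') = x then h.choose else 0
    with hinvdef
  have hinvlt : ∀ x, inv x < lam.ord := by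
    intro x
    rw [hinvdef]
    dsimp only
    split
    · next h => exact h.choose_spec.1.2
    · exact hlimord.pos
  have hinveq : ∀ i, i ∈ Wset S [] → i < lam.ord → inv (g (η i)) = i := by
    intro i hiW hilt
    rw [hinvdef]
    dsimp only
    rw [dif_pos ⟨i, ⟨hiW, hilt⟩, rfl⟩]
    generalize_proofs h
    have hs := h.choose_spec
    have hη' := hη h.choose hs.1.1 hs.1.2
    have hηi := hη i hiW hilt
    have heq : η h.choose = η i := hinj hη'.1 hηi.1 hs.2
    obtain ⟨t', ht'⟩ := hη'.2.1
    obtain ⟨t, ht⟩ := hηi.2.1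
    have heq2 : h.choose :: t' = i :: t := ht'.symm.trans (heq.trans ht)
    exact (List.cons.inj heq2).1
  -- bounds for the fibers
  set b : Ordinal → Ordinal := fun j =>
    if j < lam.ord then ⨆ x : ↥(B [j]), (inv ↑x + 1) else 0 with hbdef
  have hblt : ∀ j, b j < lam.ord := by
    intro j
    rw [hbdef]
    dsimp only
    split
    · next hj =>
      refine Cardinal.iSup_lt_ord_of_isRegular hreg ?_ fun x => ?_
      · have := hcard [] hSi j (by rwa [hlam])
        rwa [hlam, Cardinal.card_ord] at this
      · rw [Ordinal.add_one_eq_succ]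
        exact hlimord.succ_lt (hinvlt _)
    · exact hlimord.pos
  have hbge : ∀ j, j < lam.ord → ∀ i, i ∈ Wset S [] → i < lam.ord →
      g (η i) ∈ B [j] → i < b j := by
    intro j hj i hiW hilt hmem
    rw [hbdef]
    dsimp only
    rw [if_pos hj]
    have hle : inv (g (η i)) + 1 ≤ ⨆ x : ↥(B [j]), (inv ↑x + 1) := by
      refine le_ciSup (f := fun x : ↥(B [j]) => inv ↑x + 1) ?_ ⟨g (η i), hmem⟩
      refine ⟨lam.ord, ?_⟩
      rintro _ ⟨x, rfl⟩
      dsimp only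
      rw [Ordinal.add_one_eq_succ]
      exact le_of_lt (hlimord.succ_lt (hinvlt _))
    rw [hinveq i hiW hilt] at hle
    calc i < i + 1 := by rw [Ordinal.add_one_eq_succ]; exact Order.lt_succ i
    _ ≤ _ := hle
  -- the club
  set D : Set Ordinal := {δ | δ < lam.ord ∧ Order.IsSuccLimit δ ∧ ∀ j < δ, b j < δ} with hDdef
  have hDclosed : ClosedBelow D lam.ord := by
    intro δ hδ hlim happ
    refine ⟨hδ, hlim, fun j hj => ?_⟩
    obtain ⟨γ, hγD, hγ1, hγ2⟩ := happ (Order.succ j) (hlim.succ_lt hj)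
    exact lt_trans (hγD.2.2 j (Order.succ_le_iff.mp hγ1)) hγ2
  have hDunb : UnboundedBelow D lam.ord := by
    intro a ha
    set F : ℕ → Ordinal := fun n =>
      Nat.rec (a + 1) (fun _ prev => max (prev + 1) (Ordinal.bsup prev (fun j _ => b j + 1))) n
      with hFdef
    have hF0 : F 0 = a + 1 := rfl
    have hFsucc : ∀ n, F (n + 1) = max (F n + 1) (Ordinal.bsup (F n) (fun j _ => b j + 1)) :=
      fun n => rfl
    have hFlt : ∀ n, F n < lam.ord := by
      intro n
      induction n with
      | zero => rw [hF0, Ordinal.add_one_eq_succ]; exact hlimord.succ_lt ha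
      | succ n ih =>
        rw [hFsucc]
        refine max_lt ?_ ?_
        · rw [Ordinal.add_one_eq_succ]; exact hlimord.succ_lt ih
        · refine Cardinal.bsup_lt_ord_of_isRegular hreg (Cardinal.lt_ord.mp ih) fun j hj => ?_
          rw [Ordinal.add_one_eq_succ]
          exact hlimord.succ_lt (hblt j)
    have hFmono : ∀ n, F n < F (n + 1) := by
      intro n
      rw [hFsucc]
      refine lt_of_lt_of_le ?_ (le_max_left _ _)
      rw [Ordinal.add_one_eq_succ]; exact Order.lt_succ _
    have hbddF : BddAbove (Set.range F) := by
      refine ⟨lam.ord, ?_⟩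
      rintro _ ⟨n, rfl⟩
      exact le_of_lt (hFlt n)
    set δ : Ordinal := ⨆ n, F n with hδdef
    have hFle : ∀ n, F n ≤ δ := fun n => le_ciSup hbddF n
    have hδlt : δ < lam.ord := by
      refine Cardinal.iSup_lt_ord_lift_of_isRegular hreg ?_ hFlt
      simpa using hunc
    have hltδ : ∀ β, β < δ → ∃ n, β < F n := fun β hβ => (lt_ciSup_iff hbddF).mp hβ
    have hδlim : Order.IsSuccLimit δ := by
      rw [Ordinal.isSuccLimit_iff, Order.isSuccPrelimit_iff_succ_lt]
      constructor
      · have h01 : (0 : Ordinal) < F 0 := by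
          rw [hF0, Ordinal.add_one_eq_succ]
          exact lt_of_le_of_lt (zero_le (a := a)) (Order.lt_succ a)
        exact (lt_of_lt_of_le h01 (hFle 0)).ne'
      · intro β hβ
        obtain ⟨n, hn⟩ := hltδ β hβ
        have : Order.succ β ≤ F n := Order.succ_le_iff.mpr hn
        exact lt_of_le_of_lt this (lt_of_lt_of_le (hFmono n) (hFle (n + 1)))
    refine ⟨δ, ⟨hδlt, hδlim, ?_⟩, ?_, hδlt⟩
    · intro j hj
      obtain ⟨n, hn⟩ := hltδ j hj
      have h1 : b j + 1 ≤ Ordinal.bsup (F n) (fun j _ => b j + 1) := Ordinal.le_bsup _ j hn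
      have h2 : Ordinal.bsup (F n) (fun j _ => b j + 1) ≤ F (n + 1) := by
        rw [hFsucc]; exact le_max_right _ _
      have : b j < b j + 1 := by rw [Ordinal.add_one_eq_succ]; exact Order.lt_succ _
      exact lt_of_lt_of_le this ((h1.trans h2).trans (hFle (n + 1)))
    · have : a < F 0 := by rw [hF0, Ordinal.add_one_eq_succ]; exact Order.lt_succ _
      exact le_of_lt (lt_of_lt_of_le this (hFle 0))
  obtain ⟨i, hiW, hilt, hlim, hbd⟩ := hWstat D hDclosed hDunb
  -- continuity at i gives a regressive value
  have hgB := (hη i hiW hilt).2.2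
  have hcont2 : B [i] = ⋃ j ∈ Iio i, B [j] := hcont [] hSi i (by rwa [hlam]) hlim
  rw [hcont2] at hgB
  simp only [Set.mem_iUnion, Set.mem_Iio] at hgB
  obtain ⟨j, hji, hmem⟩ := hgB
  have h1 : i < b j := hbge j (lt_trans hji hilt) i hiW hilt hmem
  exact absurd (hbd j hji) (asymm h1)

/-- Claim 3.5. If `⟨B_η : η ∈ S_c⟩` is a `λ`-system over a `λ`-set `S`
(increasing, continuous, with `|B_{η⌢⟨i⟩}| < λ(η,S)`) and for each `η ∈ S_f` the set
`s_η` is a nonempty subset of `⋃_{ℓ < lg(η)} B_{η↾(ℓ+1)}`, then `{ s_η : η ∈ S_f }`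
has no transversal (injective choice function). -/
theorem no_transversal_of_lambdaSystem {α : Type*} (lam : Cardinal)
    (hreg : lam.IsRegular) (hunc : Cardinal.aleph0 < lam)
    (S : Set Seq) (hS : IsLambdaSet lam.ord S)
    (B : Seq → Set α)
    (hmono : ∀ η ∈ Si S, ∀ i j : Ordinal, i < j → j < lamOf S η →
      B (η ++ [i]) ⊆ B (η ++ [j]))
    (hcont : ∀ η ∈ Si S, ∀ δ : Ordinal, δ < lamOf S η → Order.IsSuccLimit δ →
      B (η ++ [δ]) = ⋃ i ∈ Iio δ, B (η ++ [i]))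
    (hcard : ∀ η ∈ Si S, ∀ i : Ordinal, i < lamOf S η →
      Cardinal.mk ↥(B (η ++ [i])) < (lamOf S η).card)
    (s : Seq → Set α)
    (hne : ∀ η ∈ Sf S, (s η).Nonempty)
    (hsub : ∀ η ∈ Sf S, s η ⊆ ⋃ ℓ ∈ Finset.range η.length, B (η.take (ℓ + 1))) :
    ¬ ∃ g : Seq → α, (∀ η ∈ Sf S, g η ∈ s η) ∧ Set.InjOn g (Sf S) := by
  rintro ⟨g, hg, hinj⟩
  obtain ⟨hne0, hchain, hbd, hpref, hstat, hlam⟩ := hS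
  obtain ⟨η0, hη0⟩ := hne0
  have h0 : ([] : Seq) ∈ S := hpref η0 hη0 [] (List.nil_prefix)
  exact aux lam hreg hunc S h0 hchain hstat hlam B hmono hcont hcard s g hg hinj hsub

end Sh521
end

section
/- Let N be the free group on { b_{ℓ,m} : 1 ≤ ℓ < n, m < ω } ∪ { y_m : m < ω } with b_{0,0} := y_0 and b_{0,m+1} := b_{1,m+1} ⋯ b_{n-1,m+1} b_{0,m} (y_{m+1})². Then for no free group F is the quotient of the free product N * F by the normal closure of { b_{ℓ,m} : ℓ < n, m < ω } a free group; equivalently, N * F has no free basis extending { b_{ℓ,m} : ℓ < n, m < ω }. -/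
namespace Sh521
open FreeGroup List

/-- Free generators of `N`: the `b_{ℓ,m}` for `1 ≤ ℓ < n` and the `y_m`. -/
abbrev Gen (n : ℕ) := ({i : Fin n // (i : ℕ) ≠ 0} × ℕ) ⊕ ℕ

/-- The generator `y_m`. -/
def y (n : ℕ) (m : ℕ) : FreeGroup (Gen n) := FreeGroup.of (Sum.inr m)

/-- The recursively defined elements `b_{0,m}`:
`b_{0,0} = y_0` and `b_{0,m+1} = b_{1,m+1} ⋯ b_{n-1,m+1} b_{0,m} (y_{m+1})²`. -/
def b0 (n : ℕ) : ℕ → FreeGroup (Gen n)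
  | 0 => FreeGroup.of (Sum.inr 0)
  | m + 1 =>
      (((List.finRange n).map fun ℓ : Fin n =>
        if h : (ℓ : ℕ) = 0 then 1
        else FreeGroup.of (Sum.inl (⟨ℓ, h⟩, m + 1)))).prod
        * b0 n m * (FreeGroup.of (Sum.inr (m + 1))) ^ 2

/-- The elements `b_{ℓ,m}` of `N`: generators for `ℓ ≠ 0`, and the recursively defined
words `b_{0,m}` for `ℓ = 0`. -/
def b (n : ℕ) (ℓ : Fin n) (m : ℕ) : FreeGroup (Gen n) :=
  if h : (ℓ : ℕ) = 0 then b0 n m else FreeGroup.of (Sum.inl (⟨ℓ, h⟩, m))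

/-- `X` is a free basis of the group `G`. -/
def IsFreeBasis (G : Type*) [Group G] (X : Set G) : Prop :=
  ∃ e : FreeGroup X ≃* G, ∀ x : X, e (FreeGroup.of x) = (x : G)


variable {α : Type*} [DecidableEq α]

/-- No-cancellation relation between adjacent letters. -/
def NR (p q : α × Bool) : Prop := ¬(p.1 = q.1 ∧ p.2 = !q.2)

lemma reduce_eq_self_of_chain' {L : List (α × Bool)} (h : List.Chain' NR L) :
    FreeGroup.reduce L = L := by
  induction L with
  | nil => rfl
  | cons x L ih =>
    replace h := List.isChain_cons.1 h
    rw [FreeGroup.reduce.cons, ih h.2]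
    cases L with
    | nil => rfl
    | cons hd tl =>
      have := h.1 hd rfl
      simp only [NR] at this
      simp only [if_neg this]

lemma chain'_reduce (L : List (α × Bool)) : List.Chain' NR (FreeGroup.reduce L) := by
  induction L with
  | nil => exact List.isChain_nil
  | cons x L ih =>
    rw [FreeGroup.reduce.cons]
    cases h : FreeGroup.reduce L with
    | nil => exact List.isChain_singleton _
    | cons hd tl =>
      rw [h] at ih
      by_cases hc : x.1 = hd.1 ∧ x.2 = !hd.2
      · simp only [if_pos hc]
        exact ih.tail
      · simp only [if_neg hc]
        exact List.isChain_cons_cons.2 ⟨hc, ih⟩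

lemma mul_self_ne_one (g : FreeGroup α) (hg : g ≠ 1) : g * g ≠ 1 := by
  suffices H : ∀ n (g : FreeGroup α), g.norm = n → g ≠ 1 → g * g ≠ 1 from
    H g.norm g rfl hg
  intro n
  induction n using Nat.strong_induction_on with
  | _ n ih =>
    intro g hn hg
    have hL0 : g.toWord ≠ [] := fun h => hg (FreeGroup.toWord_eq_nil_iff.1 h)
    obtain ⟨a, M, hLam⟩ : ∃ a M, g.toWord = a :: M :=
      List.exists_cons_of_ne_nil hL0
    have hred : FreeGroup.reduce (a :: M) = a :: M := by
      rw [← hLam]; exact FreeGroup.reduce_toWord g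
    have hch : List.Chain' NR (a :: M) := by rw [← hred]; exact chain'_reduce _
    have hgmk : g = FreeGroup.mk (a :: M) := by rw [← hLam, FreeGroup.mk_toWord]
    set z := (a :: M).getLast (List.cons_ne_nil a M) with hz
    by_cases hc : z.1 = a.1 ∧ z.2 = !a.2
    · -- cancellation case: conjugate
      have hM0 : M ≠ [] := by
        rintro rfl
        rw [List.getLast_singleton] at hz
        rw [hz] at hc
        simp at hc
      have hMz : M.getLast hM0 = z := (List.getLast_cons hM0).symm
      have hMsplit : M.dropLast ++ [z] = M := by
        rw [← hMz]; exact List.dropLast_append_getLast hM0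
      set c : FreeGroup α := FreeGroup.mk [a] with hcdef
      set u : FreeGroup α := FreeGroup.mk M.dropLast with hu
      have hzinv : FreeGroup.mk [z] = c⁻¹ := by
        rw [hcdef, FreeGroup.inv_mk]
        congr 1
        have : z = (a.1, !a.2) := Prod.ext hc.1 hc.2
        rw [this]
        simp [FreeGroup.invRev]
      have hgdecomp : g = c * u * c⁻¹ := by
        rw [← hzinv, hcdef, hu, FreeGroup.mul_mk, FreeGroup.mul_mk, hgmk]
        congr 1
        rw [List.append_assoc, hMsplit, List.singleton_append]
      have hune : u ≠ 1 := by
        intro h1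
        apply hg
        rw [hgdecomp, h1]; group
      have hnormu : u.norm < n := by
        have h1 : u.norm ≤ M.dropLast.length := FreeGroup.norm_mk_le
        have h2 : M.dropLast.length = M.length - 1 := List.length_dropLast
        have h3 : g.norm = M.length + 1 := by
          rw [FreeGroup.norm, hLam]; simp
        have h4 : 0 < M.length := List.length_pos_iff.2 hM0
        omega
      have := ih u.norm hnormu u rfl hune
      intro hgg
      apply this
      have h2 : c * (u * u) * c⁻¹ = 1 := by
        rw [← hgg, hgdecomp]; group
      calc u * u = c⁻¹ * (c * (u * u) * c⁻¹) * c := by group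
        _ = 1 := by rw [h2]; group
    · -- no cancellation: L ++ L reduced
      have hjoin : List.Chain' NR ((a :: M) ++ (a :: M)) := by
        show List.IsChain NR _
        rw [List.isChain_append]
        refine ⟨hch, hch, ?_⟩
        intro p hp q hq
        rw [List.getLast?_eq_getLast (List.cons_ne_nil a M)] at hp
        simp only [List.head?_cons, Option.mem_def, Option.some.injEq] at hp hq
        subst hp; subst hq
        exact hc
      intro hgg
      have hW : (g * g).toWord = (a :: M) ++ (a :: M) := by
        rw [hgmk, FreeGroup.mul_mk, FreeGroup.toWord_mk, reduce_eq_self_of_chain' hjoin]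
      rw [hgg] at hW
      simp at hW


lemma sq_eq_one_imp {G : Type*} [Group G] (hG : IsFreeGroup G) {g : G} (h : g * g = 1) :
    g = 1 := by
  classical
  let e := IsFreeGroup.toFreeGroup G
  by_contra hg
  have hsq : e g * e g = 1 := by
    have := (map_mul e g g).symm
    rw [h] at this
    exact this.trans (map_one e)
  refine mul_self_ne_one (e g) (fun h' => hg ?_) hsq
  have := congrArg e.symm h'
  simpa using this

end Sh521

namespace Sh521

/-- clause (iv) of the `n`-th `h`-construction principle for groups.
For no free group `F` is the quotient of the free product `N ∗ F` by the normal closure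
of `{ b_{ℓ,m} : ℓ < n, m < ω }` a free group; equivalently `N ∗ F` has no free basis
extending `{ b_{ℓ,m} : ℓ < n, m < ω }`. -/
theorem no_free_quotient_of_coprod (n : ℕ) (hn : 1 ≤ n) (ι : Type) :
    ¬ IsFreeGroup
        ((Monoid.Coprod (FreeGroup (Gen n)) (FreeGroup ι)) ⧸
          Subgroup.normalClosure
            {x | ∃ (ℓ : Fin n) (m : ℕ), x = Monoid.Coprod.inl (b n ℓ m)}) ∧
    ¬ ∃ X : Set (Monoid.Coprod (FreeGroup (Gen n)) (FreeGroup ι)),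
        {x | ∃ (ℓ : Fin n) (m : ℕ), x = Monoid.Coprod.inl (b n ℓ m)} ⊆ X ∧
        IsFreeBasis (Monoid.Coprod (FreeGroup (Gen n)) (FreeGroup ι)) X := by
  classical
  set G := Monoid.Coprod (FreeGroup (Gen n)) (FreeGroup ι) with hG
  set S : Set G := {x | ∃ (ℓ : Fin n) (m : ℕ), x = Monoid.Coprod.inl (b n ℓ m)} with hS
  set NN := Subgroup.normalClosure S with hNN
  set π : G →* G ⧸ NN := QuotientGroup.mk' NN with hπ
  have hSone : ∀ x ∈ S, π x = 1 := fun x hx =>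
    (QuotientGroup.eq_one_iff x).2 (Subgroup.subset_normalClosure hx)
  have hb1 : ∀ (ℓ : Fin n) (m : ℕ), π (Monoid.Coprod.inl (b n ℓ m)) = 1 :=
    fun ℓ m => hSone _ ⟨ℓ, m, rfl⟩
  set g : G ⧸ NN := π (Monoid.Coprod.inl (FreeGroup.of (Sum.inr 1))) with hgdef
  set φ : FreeGroup (Gen n) →* G ⧸ NN := π.comp Monoid.Coprod.inl with hφ
  have hφb : ∀ (ℓ : Fin n) (m : ℕ), φ (b n ℓ m) = 1 := fun ℓ m => hb1 ℓ m
  -- the prefix product maps to 1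
  have hprod : ∀ m : ℕ,
      φ (((List.finRange n).map fun ℓ : Fin n =>
        if h : (ℓ : ℕ) = 0 then 1
        else FreeGroup.of (Sum.inl (⟨ℓ, h⟩, m + 1))).prod) = 1 := by
    intro m
    rw [map_list_prod]
    apply List.prod_eq_one
    intro x hx
    simp only [List.map_map, List.mem_map, Function.comp_apply] at hx
    obtain ⟨ℓ, -, rfl⟩ := hx
    by_cases h : (ℓ : ℕ) = 0
    · rw [dif_pos h, map_one]
    · rw [dif_neg h]
      have : FreeGroup.of (Sum.inl (⟨ℓ, h⟩, m + 1) : Gen n) = b n ℓ (m + 1) := by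
        rw [b, dif_neg h]
      rw [this]; exact hφb ℓ (m + 1)
  -- g is an involution in the quotient
  have hgsq : g * g = 1 := by
    have e1 : φ (b0 n 1) = 1 := by
      have := hφb ⟨0, hn⟩ 1
      rwa [b, dif_pos rfl] at this
    have e0 : φ (b0 n 0) = 1 := by
      have := hφb ⟨0, hn⟩ 0
      rwa [b, dif_pos rfl] at this
    have hrel : b0 n 1 =
        (((List.finRange n).map fun ℓ : Fin n =>
          if h : (ℓ : ℕ) = 0 then 1
          else FreeGroup.of (Sum.inl (⟨ℓ, h⟩, 0 + 1))).prod)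
          * b0 n 0 * (FreeGroup.of (Sum.inr (0 + 1))) ^ 2 := rfl
    have := congrArg φ hrel
    rw [e1, map_mul, map_mul, map_pow, hprod 0, e0, one_mul, one_mul] at this
    have hgφ : φ (FreeGroup.of (Sum.inr (0 + 1))) = g := rfl
    rw [hgφ] at this
    rw [← pow_two]; exact this.symm
  -- g is nontrivial in the quotient
  have hgne : g ≠ 1 := by
    set f : Gen n → ℤˣ := fun x => if x = Sum.inr 1 then -1 else 1 with hf
    set χ₀ : FreeGroup (Gen n) →* ℤˣ := FreeGroup.lift f with hχ₀
    have hχprod : ∀ m : ℕ,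
        χ₀ (((List.finRange n).map fun ℓ : Fin n =>
          if h : (ℓ : ℕ) = 0 then 1
          else FreeGroup.of (Sum.inl (⟨ℓ, h⟩, m + 1))).prod) = 1 := by
      intro m
      rw [map_list_prod]
      apply List.prod_eq_one
      intro x hx
      simp only [List.map_map, List.mem_map, Function.comp_apply] at hx
      obtain ⟨ℓ, -, rfl⟩ := hx
      by_cases h : (ℓ : ℕ) = 0
      · rw [dif_pos h, map_one]
      · rw [dif_neg h, hχ₀, FreeGroup.lift_apply_of, hf]
        simp
    have hχb0 : ∀ m, χ₀ (b0 n m) = 1 := by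
      intro m
      induction m with
      | zero =>
        rw [show b0 n 0 = FreeGroup.of (Sum.inr 0) from rfl, hχ₀, FreeGroup.lift_apply_of, hf]
        simp
      | succ m ih =>
        rw [show b0 n (m + 1) =
          (((List.finRange n).map fun ℓ : Fin n =>
            if h : (ℓ : ℕ) = 0 then 1
            else FreeGroup.of (Sum.inl (⟨ℓ, h⟩, m + 1))).prod)
            * b0 n m * (FreeGroup.of (Sum.inr (m + 1))) ^ 2 from rfl]
        rw [map_mul, map_mul, map_pow, hχprod m, ih, one_mul, one_mul]
        rw [hχ₀, FreeGroup.lift_apply_of]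
        exact Int.units_sq _
    set χ : G →* ℤˣ := Monoid.Coprod.lift χ₀ 1 with hχ
    have hSker : S ⊆ (χ.ker : Set G) := by
      rintro x ⟨ℓ, m, rfl⟩
      have : χ (Monoid.Coprod.inl (b n ℓ m)) = χ₀ (b n ℓ m) := by
        rw [hχ, Monoid.Coprod.lift_apply_inl]
      simp only [SetLike.mem_coe, MonoidHom.mem_ker]
      rw [this]
      by_cases h : (ℓ : ℕ) = 0
      · rw [b, dif_pos h]; exact hχb0 m
      · rw [b, dif_neg h, hχ₀, FreeGroup.lift_apply_of, hf]; simp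
    have hNker : NN ≤ χ.ker := Subgroup.normalClosure_le_normal hSker
    set χ' : G ⧸ NN →* ℤˣ := QuotientGroup.lift NN χ hNker with hχ'
    intro hone
    have hval : χ' g = -1 := by
      show χ (Monoid.Coprod.inl (FreeGroup.of (Sum.inr 1))) = -1
      rw [hχ, Monoid.Coprod.lift_apply_inl, hχ₀, FreeGroup.lift_apply_of, hf]
      simp
    rw [hone, map_one] at hval
    exact absurd hval.symm (by decide)
  -- first conjunct
  have h1 : ¬ IsFreeGroup (G ⧸ NN) := fun hfree => hgne (sq_eq_one_imp hfree hgsq)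
  refine ⟨h1, ?_⟩
  rintro ⟨X, hSX, e, he⟩
  apply h1
  -- build the isomorphism with the free group on X \ S
  set T := {x : X // ¬ (x : G) ∈ S} with hT
  set r : FreeGroup X →* FreeGroup T :=
    FreeGroup.lift fun x => if h : (x : G) ∈ S then 1 else FreeGroup.of (⟨x, h⟩ : T) with hr
  set ρ : G →* FreeGroup T := r.comp e.symm.toMonoidHom with hρ
  have hsymm : ∀ x : X, e.symm (x : G) = FreeGroup.of x := by
    intro x
    rw [MulEquiv.symm_apply_eq, he]
  have hρS : ∀ s ∈ S, ρ s = 1 := by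
    intro s hs
    have hsX : s ∈ X := hSX hs
    show r (e.symm s) = 1
    rw [show e.symm s = FreeGroup.of (⟨s, hsX⟩ : X) from hsymm ⟨s, hsX⟩,
      hr, FreeGroup.lift_apply_of, dif_pos hs]
  have hNker2 : NN ≤ ρ.ker := Subgroup.normalClosure_le_normal hρS
  set ρ' : G ⧸ NN →* FreeGroup T := QuotientGroup.lift NN ρ hNker2 with hρ'
  set j : FreeGroup T →* G ⧸ NN := FreeGroup.lift fun t : T => π ((t : X) : G) with hj
  have h₁ : ρ'.comp j = MonoidHom.id (FreeGroup T) := by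
    apply FreeGroup.ext_hom
    intro t
    rw [MonoidHom.comp_apply, hj, FreeGroup.lift_apply_of, MonoidHom.id_apply]
    show r (e.symm ((t : X) : G)) = FreeGroup.of t
    rw [hsymm (t : X), hr, FreeGroup.lift_apply_of, dif_neg t.2]
  have h₂ : j.comp ρ' = MonoidHom.id (G ⧸ NN) := by
    apply QuotientGroup.monoidHom_ext
    have hcomp : ((j.comp ρ').comp (QuotientGroup.mk' NN)).comp e.toMonoidHom
        = ((MonoidHom.id (G ⧸ NN)).comp (QuotientGroup.mk' NN)).comp e.toMonoidHom := by
      apply FreeGroup.ext_hom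
      intro x
      simp only [MonoidHom.comp_apply, MulEquiv.coe_toMonoidHom]
      rw [he x]
      show j (r (e.symm ((x : X) : G))) = MonoidHom.id _ (π (x : G))
      rw [hsymm x, hr, FreeGroup.lift_apply_of, MonoidHom.id_apply]
      by_cases h : (x : G) ∈ S
      · rw [dif_pos h, map_one, hSone _ h]
      · rw [dif_neg h, hj, FreeGroup.lift_apply_of]
    apply MonoidHom.ext
    intro w
    obtain ⟨v, rfl⟩ := e.surjective w
    simpa using congrArg (fun F : FreeGroup ↑X →* G ⧸ NN => F v) hcomp
  exact IsFreeGroup.ofMulEquiv (MonoidHom.toMulEquiv ρ' j h₂ h₁).symm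

end Sh521
end

section
/- Let n ≥ 1 and let G be the abelian group freely generated by { y_m : m < ω } ∪ { x_{ℓ,m} : ℓ < n, m < ω } subject to 2·y_{m+1} = y_m + Σ_{ℓ<n} x_{ℓ,m}. Then for each ℓ* < n and m* < ω, the group G is free abelian with basis { y_m : m ≥ m* } ∪ { x_{ℓ,m} : ℓ < n, m < ω, ¬(ℓ = ℓ* ∧ m ≥ m*) } — i.e. one may omit the generators x_{ℓ*,m} for m ≥ m* (they are expressible from the rest via the relations) and the remaining generators are free. -/
namespace Sh521

/-- Generators: `x_{ℓ,m}` (via `Sum.inl`) and `y_m` (via `Sum.inr`). -/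
abbrev Gen2 (n : ℕ) := (Fin n × ℕ) ⊕ ℕ

/-- The relations `2·y_{m+1} = y_m + Σ_{ℓ<n} x_{ℓ,m}` (for `m < ω`). -/
def rels2 (n : ℕ) : Set (Gen2 n →₀ ℤ) :=
  {r | ∃ m : ℕ,
    r = Finsupp.single (Sum.inr (m + 1)) (2 : ℤ)
        - Finsupp.single (Sum.inr m) (1 : ℤ)
        - ∑ ℓ : Fin n, Finsupp.single (Sum.inl (ℓ, m)) (1 : ℤ)}

/-- The abelian group freely generated by `{y_m} ∪ {x_{ℓ,m}}` subject to
`2·y_{m+1} = y_m + Σ_{ℓ<n} x_{ℓ,m}`. -/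
abbrev Pres2 (n : ℕ) : Type := (Gen2 n →₀ ℤ) ⧸ Submodule.span ℤ (rels2 n)

/-- The image of the generator `x_{ℓ,m}`. -/
noncomputable def xg (n : ℕ) (ℓ : Fin n) (m : ℕ) : Pres2 n :=
  Submodule.Quotient.mk (Finsupp.single (Sum.inl (ℓ, m)) (1 : ℤ))

/-- The image of the generator `y_m`. -/
noncomputable def yg (n : ℕ) (m : ℕ) : Pres2 n :=
  Submodule.Quotient.mk (Finsupp.single (Sum.inr m) (1 : ℤ))

end Sh521

namespace Sh521

section Aux

variable (n : ℕ) (lstar : Fin n) (mstar : ℕ)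

/-- The claimed basis index set as a subtype. -/
abbrev SS := {g : Gen2 n // (∃ m : ℕ, g = Sum.inr m ∧ mstar ≤ m) ∨
  (∃ (ℓ : Fin n) (m : ℕ), g = Sum.inl (ℓ, m) ∧ ¬(ℓ = lstar ∧ mstar ≤ m))}

/-- Expression of `y_m` in terms of the basis. -/
noncomputable def ey (m : ℕ) : SS n lstar mstar →₀ ℤ :=
  if h : mstar ≤ m then Finsupp.single ⟨Sum.inr m, Or.inl ⟨m, rfl, h⟩⟩ 1
  else (2:ℤ) • ey (m+1) -
    ∑ ℓ : Fin n, Finsupp.single ⟨Sum.inl (ℓ, m), Or.inr ⟨ℓ, m, rfl, fun hc => h hc.2⟩⟩ 1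
termination_by mstar - m
decreasing_by omega

lemma ey_pos (m : ℕ) (h : mstar ≤ m) :
    ey n lstar mstar m = Finsupp.single ⟨Sum.inr m, Or.inl ⟨m, rfl, h⟩⟩ 1 := by
  rw [ey]; exact dif_pos h

lemma ey_neg (m : ℕ) (h : ¬ mstar ≤ m) :
    ey n lstar mstar m = (2:ℤ) • ey n lstar mstar (m+1) -
      ∑ ℓ : Fin n, Finsupp.single ⟨Sum.inl (ℓ, m), Or.inr ⟨ℓ, m, rfl, fun hc => h hc.2⟩⟩ 1 := by
  rw [ey]; exact dif_neg h

/-- Expression of `x_{ℓ,m}` when it is in the basis, else `0`. -/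
noncomputable def exS (ℓ : Fin n) (m : ℕ) : SS n lstar mstar →₀ ℤ :=
  if h : ℓ = lstar ∧ mstar ≤ m then 0
  else Finsupp.single ⟨Sum.inl (ℓ, m), Or.inr ⟨ℓ, m, rfl, h⟩⟩ 1

/-- Expression of each generator in terms of the basis. -/
noncomputable def eg : Gen2 n → (SS n lstar mstar →₀ ℤ)
  | Sum.inr m => ey n lstar mstar m
  | Sum.inl (ℓ, m) =>
    if h : ℓ = lstar ∧ mstar ≤ m then
      (2:ℤ) • Finsupp.single ⟨Sum.inr (m+1), Or.inl ⟨m+1, rfl, h.2.trans (Nat.le_succ m)⟩⟩ 1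
        - Finsupp.single ⟨Sum.inr m, Or.inl ⟨m, rfl, h.2⟩⟩ 1
        - ∑ ℓ' : Fin n, exS n lstar mstar ℓ' m
    else exS n lstar mstar ℓ m

noncomputable def φmap : (Gen2 n →₀ ℤ) →ₗ[ℤ] (SS n lstar mstar →₀ ℤ) :=
  Finsupp.linearCombination ℤ (eg n lstar mstar)

noncomputable def βmap : (SS n lstar mstar →₀ ℤ) →ₗ[ℤ] Pres2 n :=
  Finsupp.linearCombination ℤ (fun g => Submodule.Quotient.mk (Finsupp.single g.1 (1:ℤ)))

lemma beta_single (s : SS n lstar mstar) :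
    βmap n lstar mstar (Finsupp.single s 1) =
      Submodule.Quotient.mk (Finsupp.single s.1 (1:ℤ)) := by
  rw [βmap, Finsupp.linearCombination_single, one_smul]

lemma rel_mk' (m : ℕ) : (2:ℤ) • yg n (m+1) = yg n m + ∑ ℓ : Fin n, xg n ℓ m := by
  have h0 : ((Submodule.span ℤ (rels2 n)).mkQ)
      (Finsupp.single (Sum.inr (m+1) : Gen2 n) (2:ℤ)
        - Finsupp.single (Sum.inr m) 1
        - ∑ ℓ : Fin n, Finsupp.single (Sum.inl (ℓ, m)) 1) = 0 := by
    rw [Submodule.mkQ_apply, Submodule.Quotient.mk_eq_zero]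
    exact Submodule.subset_span ⟨m, rfl⟩
  have h1 : (Finsupp.single (Sum.inr (m+1) : Gen2 n) (2:ℤ))
      = (2:ℤ) • Finsupp.single (Sum.inr (m+1)) (1:ℤ) := by
    rw [Finsupp.smul_single]; norm_num
  rw [h1, map_sub, map_sub, map_smul, map_sum, sub_sub, sub_eq_zero] at h0
  simpa [yg, xg, Submodule.mkQ_apply] using h0

lemma beta_exS (ℓ : Fin n) (m : ℕ) :
    βmap n lstar mstar (exS n lstar mstar ℓ m) =
      if ℓ = lstar ∧ mstar ≤ m then 0 else xg n ℓ m := by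
  rw [exS]; split
  · simp
  · rw [beta_single]; rfl

lemma beta_ey (m : ℕ) : βmap n lstar mstar (ey n lstar mstar m) = yg n m := by
  by_cases h : mstar ≤ m
  · rw [ey_pos n lstar mstar m h, beta_single]; rfl
  · rw [ey_neg n lstar mstar m h, map_sub, map_smul, map_sum, beta_ey (m+1)]
    simp only [beta_single]
    rw [rel_mk' n m]
    have : (∑ ℓ : Fin n, (Submodule.Quotient.mk
        (Finsupp.single (Sum.inl (ℓ, m) : Gen2 n) (1:ℤ)) : Pres2 n)) = ∑ ℓ : Fin n, xg n ℓ m := rfl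
    rw [this]; abel
termination_by mstar - m
decreasing_by omega

lemma beta_eg (g : Gen2 n) :
    βmap n lstar mstar (eg n lstar mstar g) =
      Submodule.Quotient.mk (Finsupp.single g (1:ℤ)) := by
  match g with
  | Sum.inr m => exact beta_ey n lstar mstar m
  | Sum.inl (ℓ, m) =>
    show βmap n lstar mstar (eg n lstar mstar (Sum.inl (ℓ, m))) = xg n ℓ m
    rw [eg]
    split_ifs with h
    · obtain ⟨rfl, hm⟩ := h
      rw [map_sub, map_sub, map_smul, map_sum]
      simp only [beta_exS, beta_single]
      have hsum : (∑ ℓ' : Fin n, if ℓ' = ℓ ∧ mstar ≤ m then (0:Pres2 n) else xg n ℓ' m)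
          = (∑ ℓ' : Fin n, xg n ℓ' m) - xg n ℓ m := by
        simp only [hm, and_true]
        have hp : ∀ ℓ' : Fin n, (if ℓ' = ℓ then (0:Pres2 n) else xg n ℓ' m)
            = xg n ℓ' m - (if ℓ' = ℓ then xg n ℓ' m else 0) := by
          intro ℓ'; split <;> simp
        rw [Finset.sum_congr rfl (fun ℓ' _ => hp ℓ'), Finset.sum_sub_distrib]
        simp
      rw [hsum]
      have hy1 : (Submodule.Quotient.mk (Finsupp.single (Sum.inr (m+1) : Gen2 n) (1:ℤ)) : Pres2 n) = yg n (m+1) := rfl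
      have hy0 : (Submodule.Quotient.mk (Finsupp.single (Sum.inr m : Gen2 n) (1:ℤ)) : Pres2 n) = yg n m := rfl
      rw [hy1, hy0, rel_mk' n m]
      abel
    · rw [beta_exS, if_neg h]

lemma phi_rels : Submodule.span ℤ (rels2 n) ≤ LinearMap.ker (φmap n lstar mstar) := by
  rw [Submodule.span_le]
  rintro r ⟨m, rfl⟩
  simp only [SetLike.mem_coe, LinearMap.mem_ker, map_sub, map_sum, φmap,
    Finsupp.linearCombination_single, one_smul]
  show (2:ℤ) • ey n lstar mstar (m+1) - ey n lstar mstar m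
      - ∑ ℓ : Fin n, eg n lstar mstar (Sum.inl (ℓ, m)) = 0
  by_cases h : mstar ≤ m
  · have key : ∀ ℓ : Fin n, eg n lstar mstar (Sum.inl (ℓ, m))
        = exS n lstar mstar ℓ m + (if ℓ = lstar then
            ((2:ℤ) • Finsupp.single (⟨Sum.inr (m+1), Or.inl ⟨m+1, rfl, h.trans (Nat.le_succ m)⟩⟩ : SS n lstar mstar) 1
              - Finsupp.single ⟨Sum.inr m, Or.inl ⟨m, rfl, h⟩⟩ 1
              - ∑ ℓ' : Fin n, exS n lstar mstar ℓ' m) else 0) := by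
      intro ℓ
      rw [eg]
      by_cases hl : ℓ = lstar
      · subst hl
        rw [dif_pos ⟨rfl, h⟩, if_pos rfl]
        have h0 : exS n ℓ mstar ℓ m = 0 := by rw [exS, dif_pos ⟨rfl, h⟩]
        rw [h0, zero_add]
      · rw [dif_neg (fun hc => hl hc.1), if_neg hl, add_zero]
    rw [Finset.sum_congr rfl (fun ℓ _ => key ℓ), Finset.sum_add_distrib,
      Finset.sum_ite_eq' Finset.univ lstar, if_pos (Finset.mem_univ _)]
    rw [ey_pos n lstar mstar (m+1) (h.trans (Nat.le_succ m)), ey_pos n lstar mstar m h]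
    abel
  · have key : ∀ ℓ : Fin n, eg n lstar mstar (Sum.inl (ℓ, m))
        = Finsupp.single (⟨Sum.inl (ℓ, m), Or.inr ⟨ℓ, m, rfl, fun hc => h hc.2⟩⟩ : SS n lstar mstar) 1 := by
      intro ℓ
      rw [eg, dif_neg (fun hc => h hc.2), exS, dif_neg (fun hc => h hc.2)]
    rw [Finset.sum_congr rfl (fun ℓ _ => key ℓ), ey_neg n lstar mstar m h]
    abel

noncomputable def ψmap : Pres2 n →ₗ[ℤ] (SS n lstar mstar →₀ ℤ) :=
  Submodule.liftQ _ (φmap n lstar mstar) (phi_rels n lstar mstar)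

lemma eg_self (g : SS n lstar mstar) : eg n lstar mstar g.1 = Finsupp.single g 1 := by
  obtain ⟨g, hg⟩ := g
  rcases hg with ⟨m, rfl, hm⟩ | ⟨ℓ, m, rfl, hx⟩
  · show ey n lstar mstar m = _
    rw [ey_pos n lstar mstar m hm]
  · show eg n lstar mstar (Sum.inl (ℓ, m)) = _
    rw [eg, dif_neg hx, exS, dif_neg hx]

end Aux

/-- For each `ℓ* < n` and `m* < ω`, the group `Pres2 n` is free abelian
with basis `{ y_m : m ≥ m* } ∪ { x_{ℓ,m} : ¬(ℓ = ℓ* ∧ m ≥ m*) }`: the generators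
`x_{ℓ*,m}` for `m ≥ m*` (and the `y_m` for `m < m*`) are expressible from the rest via
the relations, and the remaining generators are free. -/
theorem pres2_free_basis_omitting_column (n : ℕ) (hn : 1 ≤ n)
    (lstar : Fin n) (mstar : ℕ) :
    ∃ v : Module.Basis
        {g : Gen2 n // (∃ m : ℕ, g = Sum.inr m ∧ mstar ≤ m) ∨
          (∃ (ℓ : Fin n) (m : ℕ), g = Sum.inl (ℓ, m) ∧ ¬(ℓ = lstar ∧ mstar ≤ m))}
        ℤ (Pres2 n),
      ∀ g, v g = Submodule.Quotient.mk (Finsupp.single g.1 (1 : ℤ)) := by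
  have h1 : (ψmap n lstar mstar).comp (βmap n lstar mstar) = LinearMap.id := by
    apply Finsupp.lhom_ext
    intro s c
    simp only [LinearMap.comp_apply, LinearMap.id_apply]
    have hc : (Finsupp.single s c : SS n lstar mstar →₀ ℤ) = c • Finsupp.single s 1 := by
      rw [Finsupp.smul_single]; norm_num
    rw [hc, map_smul, map_smul, beta_single]
    have : ψmap n lstar mstar (Submodule.Quotient.mk (Finsupp.single s.1 1))
        = eg n lstar mstar s.1 := by
      rw [ψmap, Submodule.liftQ_apply, φmap, Finsupp.linearCombination_single, one_smul]
    rw [this, eg_self]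
  have h2 : (βmap n lstar mstar).comp (ψmap n lstar mstar) = LinearMap.id := by
    apply Submodule.linearMap_qext
    apply Finsupp.lhom_ext
    intro a c
    simp only [LinearMap.comp_apply, LinearMap.id_apply, Submodule.mkQ_apply]
    have : ψmap n lstar mstar (Submodule.Quotient.mk (Finsupp.single a c))
        = c • eg n lstar mstar a := by
      rw [ψmap, Submodule.liftQ_apply, φmap, Finsupp.linearCombination_single]
    rw [this, map_smul, beta_eg, ← Submodule.Quotient.mk_smul, Finsupp.smul_single]
    norm_num
  refine ⟨Module.Basis.ofRepr (LinearEquiv.ofLinear (ψmap n lstar mstar) (βmap n lstar mstar) h1 h2), ?_⟩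
  intro g
  rw [Module.Basis.coe_ofRepr]
  simp only [LinearEquiv.ofLinear_symm_apply]
  exact beta_single n lstar mstar g

end Sh521
end
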